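/- arXiv:1303.3608 — 2 statements merged into one kernel-verified Lean document; each statement's English description precedes it below -/
import Mathlib

section
/- For every integer n ≥ 3, the weighted sum of double zeta values satisfies ∑_{k=2}^{n-1} k·ζ(k, n−k) = ζ(2, n−2) + 2ζ(n) − (n−2)·ζ(n−1, 1). -/
/-- The Riemann zeta value `ζ(s) = ∑_{k ≥ 1} k^{-s}`. -/
noncomputable def zetaR (s : ℕ) : ℝ :=
  ∑' k : {k : ℕ // 1 ≤ k}, ((k.1 : ℝ) ^ s)⁻¹

/-- The double zeta value `ζ(s₁, s₂) = ∑_{k₁ > k₂ ≥ 1} k₁^{-s₁} k₂^{-s₂}`. -/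
noncomputable def mzv2 (s₁ s₂ : ℕ) : ℝ :=
  ∑' p : {p : ℕ × ℕ // 1 ≤ p.2 ∧ p.2 < p.1},
    ((p.1.1 : ℝ) ^ s₁ * (p.1.2 : ℝ) ^ s₂)⁻¹

/-- The triple zeta value `ζ(s₁, s₂, s₃) = ∑_{k₁ > k₂ > k₃ ≥ 1} k₁^{-s₁} k₂^{-s₂} k₃^{-s₃}`. -/
noncomputable def mzv3 (s₁ s₂ s₃ : ℕ) : ℝ :=
  ∑' p : {p : ℕ × ℕ × ℕ // 1 ≤ p.2.2 ∧ p.2.2 < p.2.1 ∧ p.2.1 < p.1},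
    ((p.1.1 : ℝ) ^ s₁ * (p.1.2.1 : ℝ) ^ s₂ * (p.1.2.2 : ℝ) ^ s₃)⁻¹

/-- The quadruple zeta value `ζ(s₁, s₂, s₃, s₄)`. -/
noncomputable def mzv4 (s₁ s₂ s₃ s₄ : ℕ) : ℝ :=
  ∑' p : {p : ℕ × ℕ × ℕ × ℕ //
      1 ≤ p.2.2.2 ∧ p.2.2.2 < p.2.2.1 ∧ p.2.2.1 < p.2.1 ∧ p.2.1 < p.1},
    ((p.1.1 : ℝ) ^ s₁ * (p.1.2.1 : ℝ) ^ s₂ * (p.1.2.2.1 : ℝ) ^ s₃ * (p.1.2.2.2 : ℝ) ^ s₄)⁻¹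

/-- Terms of the generating series `G₁`. -/
noncomputable def g1term (x : ℝ) (s : ℕ) : ℝ := x ^ (s + 1) * zetaR (s + 2)

/-- `G₁(x) = ∑_{s ≥ 2} x^{s-1} ζ(s)`. -/
noncomputable def G1f (x : ℝ) : ℝ := ∑' s : ℕ, g1term x s

/-- Terms of the generating series `G₂`. -/
noncomputable def g2term (x₁ x₂ : ℝ) (p : ℕ × ℕ) : ℝ :=
  x₁ ^ (p.1 + 1) * x₂ ^ p.2 * mzv2 (p.1 + 2) (p.2 + 1)

/-- `G₂(x₁, x₂) = ∑_{s₁ ≥ 2, s₂ ≥ 1} x₁^{s₁-1} x₂^{s₂-1} ζ(s₁, s₂)`. -/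
noncomputable def G2f (x₁ x₂ : ℝ) : ℝ := ∑' p : ℕ × ℕ, g2term x₁ x₂ p

/-- Terms of the generating series `G₃`. -/
noncomputable def g3term (x₁ x₂ x₃ : ℝ) (p : ℕ × ℕ × ℕ) : ℝ :=
  x₁ ^ (p.1 + 1) * x₂ ^ p.2.1 * x₃ ^ p.2.2 * mzv3 (p.1 + 2) (p.2.1 + 1) (p.2.2 + 1)

/-- `G₃(x₁, x₂, x₃) = ∑_{s₁ ≥ 2, s₂, s₃ ≥ 1} x₁^{s₁-1} x₂^{s₂-1} x₃^{s₃-1} ζ(s₁, s₂, s₃)`. -/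
noncomputable def G3f (x₁ x₂ x₃ : ℝ) : ℝ := ∑' p : ℕ × ℕ × ℕ, g3term x₁ x₂ x₃ p


set_option maxHeartbeats 1000000
open Finset Filter Topology
open scoped ENNReal

-- from s1.lean


private lemma tel' (a b : ℝ) (ha : a ≠ 0) (hb : b ≠ 0) (r : ℕ) :
    ∀ q : ℕ, (a - b) * ∑ i ∈ Finset.Icc (r+1) (r+q), (a^i * b^(r+q+1-i))⁻¹
      = (a^r * b^q)⁻¹ - (a^(r+q) : ℝ)⁻¹ := by
  intro q
  induction q with
  | zero =>
      rw [Finset.Icc_eq_empty (by omega)]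
      simp
  | succ q ih =>
      have hstep : ∑ i ∈ Finset.Icc (r+1) (r+(q+1)), (a^i * b^(r+(q+1)+1-i))⁻¹
          = b⁻¹ * (∑ i ∈ Finset.Icc (r+1) (r+q), (a^i * b^(r+q+1-i))⁻¹)
            + (a^(r+q+1) * b)⁻¹ := by
        rw [show r+(q+1) = (r+q)+1 from by omega, Finset.sum_Icc_succ_top (by omega),
          Finset.mul_sum]
        congr 1
        · apply Finset.sum_congr rfl
          intro i hi
          have hi' := Finset.mem_Icc.1 hi
          rw [show r+q+1+1-i = (r+q+1-i)+1 from by omega, pow_succ]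
          rw [mul_inv, mul_inv, mul_inv]
          ring
        · norm_num
      rw [hstep, mul_add, mul_left_comm, ih, show r+(q+1) = r+q+1 from by omega]
      have h1 : (a:ℝ)^(r+q) ≠ 0 := pow_ne_zero _ ha
      have h2 : (a:ℝ)^r ≠ 0 := pow_ne_zero _ ha
      have h3 : (b:ℝ)^q ≠ 0 := pow_ne_zero _ hb
      field_simp
      ring

-- from s2.lean

private lemma dcount (N : ℕ) (x : ℕ → ℝ) :
    ∑ k ∈ Finset.Icc 2 N, (k:ℝ) * x k
      = ∑ k ∈ Finset.Icc 2 N, x k + ∑ j ∈ Finset.Icc 2 N, ∑ k ∈ Finset.Icc j N, x k := by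
  have h1 : ∀ j ∈ Finset.Icc 2 N, ∑ k ∈ Finset.Icc j N, x k
      = ∑ k ∈ Finset.Icc 2 N, if j ≤ k then x k else 0 := by
    intro j hj
    have hj' := Finset.mem_Icc.1 hj
    rw [← Finset.sum_filter]
    apply Finset.sum_congr _ (fun _ _ => rfl)
    ext k
    simp only [Finset.mem_filter, Finset.mem_Icc]
    omega
  rw [Finset.sum_congr rfl h1, Finset.sum_comm, ← Finset.sum_add_distrib]
  apply Finset.sum_congr rfl
  intro k hk
  have hk' := Finset.mem_Icc.1 hk
  have h2 : ∑ j ∈ Finset.Icc 2 N, (if j ≤ k then x k else 0)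
      = ((k-1 : ℕ) : ℝ) * x k := by
    rw [← Finset.sum_filter]
    have : (Finset.Icc 2 N).filter (fun j => j ≤ k) = Finset.Icc 2 k := by
      ext j; simp only [Finset.mem_filter, Finset.mem_Icc]; omega
    rw [this, Finset.sum_const, Nat.card_Icc]
    rw [show k + 1 - 2 = k - 1 from by omega, nsmul_eq_mul]
  rw [h2]
  have : ((k-1:ℕ):ℝ) = (k:ℝ) - 1 := by
    have : (1:ℕ) ≤ k := by omega
    push_cast [this]
    ring
  rw [this]; ring

-- from s3.lean



private lemma preal (m : ℕ) (hm : 1 ≤ m) (b c : ℝ) (hb : 0 < b) (hc : 0 < c) :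
    ∑ k ∈ Finset.Icc 2 (m+1), (k:ℝ) * ((b+c)^k * b^(m+2-k))⁻¹
      + (m:ℝ) * (c * (b+c)^(m+1))⁻¹
      = ((c*(b+c))⁻¹ + (c^2)⁻¹) * ((b^m)⁻¹ - ((b+c)^m)⁻¹) := by
  set a := b + c with hadef
  have ha : 0 < a := by positivity
  have hane : a ≠ 0 := ha.ne'
  have hbne : b ≠ 0 := hb.ne'
  have hcne : c ≠ 0 := hc.ne'
  have hab : a - b = c := by rw [hadef]; ring
  -- tail sums
  have htel : ∀ j, 2 ≤ j → j ≤ m+1 →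
      c * ∑ k ∈ Finset.Icc j (m+1), ((a:ℝ)^k * b^(m+2-k))⁻¹
      = (a^(j-1) * b^(m+2-j))⁻¹ - (a^(m+1))⁻¹ := by
    intro j hj2 hjm
    have H := tel' a b hane hbne (j-1) (m+2-j)
    rw [show (j-1)+(m+2-j) = m+1 from by omega, show (j-1)+1 = j from by omega] at H
    rw [← hab]
    convert H using 3
  have hSB := htel 2 le_rfl (by omega)
  have hSig := tel' a b hane hbne 0 m
  simp only [zero_add, pow_zero, one_mul] at hSig
  have hshift : ∑ j ∈ Finset.Icc 2 (m+1), ((a:ℝ)^(j-1) * b^(m+2-j))⁻¹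
      = ∑ i ∈ Finset.Icc 1 m, ((a:ℝ)^i * b^(m+1-i))⁻¹ := by
    rw [show (2:ℕ) = 1+1 from rfl, show m+1 = m+1 from rfl]
    rw [← Finset.map_add_right_Icc 1 m 1, Finset.sum_map]
    apply Finset.sum_congr rfl
    intro i hi
    have hi' := Finset.mem_Icc.1 hi
    simp only [addRightEmbedding_apply]
    rw [show i+1-1 = i from by omega, show m+2-(i+1) = m+1-i from by omega]
  have hST : c * ∑ j ∈ Finset.Icc 2 (m+1), ∑ k ∈ Finset.Icc j (m+1), ((a:ℝ)^k * b^(m+2-k))⁻¹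
      = (∑ i ∈ Finset.Icc 1 m, ((a:ℝ)^i * b^(m+1-i))⁻¹) - (m:ℝ) * (a^(m+1))⁻¹ := by
    rw [Finset.mul_sum]
    rw [Finset.sum_congr rfl (fun j hj => htel j (Finset.mem_Icc.1 hj).1 (Finset.mem_Icc.1 hj).2)]
    rw [Finset.sum_sub_distrib, hshift, Finset.sum_const, Nat.card_Icc,
      show m+1+1-2 = m from by omega, nsmul_eq_mul]
  have hdc := dcount (m+1) (fun k => ((a:ℝ)^k * b^(m+2-k))⁻¹)
  rw [hdc]
  -- Now: SB + ST + m * (c*a^(m+1))⁻¹ = RHS, with c*SB, c*ST known.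
  have hSB' : ∑ k ∈ Finset.Icc 2 (m+1), ((a:ℝ)^k * b^(m+2-k))⁻¹
      = ((a^1 * b^m)⁻¹ - (a^(m+1))⁻¹) / c := by
    rw [eq_div_iff hcne, mul_comm]
    rw [show m+2-2 = m from by omega] at hSB
    rw [hSB]
  have hSig' : ∑ i ∈ Finset.Icc 1 m, ((a:ℝ)^i * b^(m+1-i))⁻¹
      = ((b^m)⁻¹ - (a^m)⁻¹) / c := by
    rw [eq_div_iff hcne, mul_comm, ← hab]
    convert hSig using 4
  have hST' : ∑ j ∈ Finset.Icc 2 (m+1), ∑ k ∈ Finset.Icc j (m+1), ((a:ℝ)^k * b^(m+2-k))⁻¹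
      = (((b^m)⁻¹ - (a^m)⁻¹) / c - (m:ℝ) * (a^(m+1))⁻¹) / c := by
    rw [eq_div_iff hcne, mul_comm, hST, hSig']
  rw [hSB', hST']
  have h1 : (a:ℝ)^m ≠ 0 := pow_ne_zero _ hane
  have h2 : (b:ℝ)^m ≠ 0 := pow_ne_zero _ hbne
  field_simp
  ring

-- from s4.lean

noncomputable def nuR (m x : ℕ) : ℝ :=
  (((x+1)^m - x^m : ℕ) : ℝ) * (((x:ℕ):ℝ)^m * (((x+1:ℕ)):ℝ)^m)⁻¹

noncomputable def nuE (m x : ℕ) : ℝ≥0∞ :=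
  (((x+1)^m - x^m : ℕ) : ℝ≥0∞) * (((x:ℕ):ℝ≥0∞)^m * (((x+1:ℕ)):ℝ≥0∞)^m)⁻¹

lemma nuR_nonneg (m x : ℕ) : 0 ≤ nuR m x := by
  unfold nuR; positivity

lemma nuR_eq (m x : ℕ) (hx : 1 ≤ x) :
    nuR m x = (((x:ℕ):ℝ)^m)⁻¹ - ((((x+1):ℕ):ℝ)^m)⁻¹ := by
  have h : x^m ≤ (x+1)^m := Nat.pow_le_pow_left (by omega) m
  have hx0 : (0:ℝ) < (x:ℝ) := by exact_mod_cast hx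
  unfold nuR
  push_cast [h]
  field_simp

lemma sum_nuR (m bN c : ℕ) (hb : 1 ≤ bN) :
    ∑ l ∈ Finset.range c, nuR m (bN + l)
      = (((bN:ℕ):ℝ)^m)⁻¹ - ((((bN+c):ℕ):ℝ)^m)⁻¹ := by
  have h : ∀ l, nuR m (bN+l)
      = (fun l => ((((bN+l):ℕ):ℝ)^m)⁻¹) l - (fun l => ((((bN+l):ℕ):ℝ)^m)⁻¹) (l+1) := by
    intro l
    rw [nuR_eq m (bN+l) (by omega)]
    simp only []
    norm_num
    ring_nf
  rw [Finset.sum_congr rfl (fun l _ => h l), Finset.sum_range_sub']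
  simp

-- ofReal helpers
lemma hInv2 (x y s t : ℕ) (hx : 1 ≤ x) (hy : 1 ≤ y) :
    (((x:ℕ):ℝ≥0∞)^s * ((y:ℕ):ℝ≥0∞)^t)⁻¹
      = ENNReal.ofReal ((((x:ℕ):ℝ)^s * ((y:ℕ):ℝ)^t)⁻¹) := by
  have hx0 : (0:ℝ) < (x:ℝ) := by exact_mod_cast hx
  have hy0 : (0:ℝ) < (y:ℝ) := by exact_mod_cast hy
  rw [← ENNReal.ofReal_natCast x, ← ENNReal.ofReal_natCast y,
    ← ENNReal.ofReal_pow (le_of_lt hx0), ← ENNReal.ofReal_pow (le_of_lt hy0),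
    ← ENNReal.ofReal_mul (by positivity),
    ← ENNReal.ofReal_inv_of_pos (by positivity)]

lemma hInv1 (x s : ℕ) (hx : 1 ≤ x) :
    ((((x:ℕ)):ℝ≥0∞)^s)⁻¹ = ENNReal.ofReal ((((x:ℕ):ℝ)^s)⁻¹) := by
  have hx0 : (0:ℝ) < (x:ℝ) := by exact_mod_cast hx
  rw [← ENNReal.ofReal_natCast x, ← ENNReal.ofReal_pow (le_of_lt hx0),
    ← ENNReal.ofReal_inv_of_pos (by positivity)]

lemma nuE_eq_ofReal (m x : ℕ) (hx : 1 ≤ x) : nuE m x = ENNReal.ofReal (nuR m x) := by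
  unfold nuE nuR
  rw [hInv2 x (x+1) m m hx (by omega), ← ENNReal.ofReal_natCast ((x+1)^m - x^m),
    ← ENNReal.ofReal_mul (by positivity)]

lemma sum_nuE (m bN c : ℕ) (hb : 1 ≤ bN) :
    ∑ l ∈ Finset.range c, nuE m (bN + l)
      = ENNReal.ofReal (∑ l ∈ Finset.range c, nuR m (bN + l)) := by
  rw [ENNReal.ofReal_sum_of_nonneg (fun l _ => nuR_nonneg m (bN+l))]
  exact Finset.sum_congr rfl (fun l _ => nuE_eq_ofReal m (bN+l) (by omega))

-- from s5.lean



lemma pointE (m i j : ℕ) (hm : 1 ≤ m) :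
    (∑ k ∈ Finset.Icc 2 (m+1),
        (k:ℝ≥0∞) * ((((i+j+2:ℕ)):ℝ≥0∞)^k * (((i+1:ℕ)):ℝ≥0∞)^(m+2-k))⁻¹)
      + (m:ℝ≥0∞) * ((((j+1:ℕ)):ℝ≥0∞) * (((i+j+2:ℕ)):ℝ≥0∞)^(m+1))⁻¹
    = ((((j+1:ℕ)):ℝ≥0∞) * (((i+j+2:ℕ)):ℝ≥0∞))⁻¹
        * (∑ l ∈ Finset.range (j+1), nuE m (i+1+l))
      + ((((j+1:ℕ)):ℝ≥0∞)^2)⁻¹ * (∑ l ∈ Finset.range (j+1), nuE m (i+1+l)) := by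
  have hb1 : (1:ℕ) ≤ i+1 := by omega
  have hc1 : (1:ℕ) ≤ j+1 := by omega
  have ha1 : (1:ℕ) ≤ i+j+2 := by omega
  have hbR : (0:ℝ) < ((i+1:ℕ):ℝ) := by exact_mod_cast hb1
  have hcR : (0:ℝ) < ((j+1:ℕ):ℝ) := by exact_mod_cast hc1
  have haR : (0:ℝ) < ((i+j+2:ℕ):ℝ) := by exact_mod_cast ha1
  -- convert LHS sum terms
  have hL1 : ∀ k ∈ Finset.Icc 2 (m+1),
      (k:ℝ≥0∞) * ((((i+j+2:ℕ)):ℝ≥0∞)^k * (((i+1:ℕ)):ℝ≥0∞)^(m+2-k))⁻¹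
      = ENNReal.ofReal ((k:ℝ) * (((i+j+2:ℕ):ℝ)^k * ((i+1:ℕ):ℝ)^(m+2-k))⁻¹) := by
    intro k _
    rw [hInv2 _ _ _ _ ha1 hb1, ← ENNReal.ofReal_natCast k,
      ← ENNReal.ofReal_mul (Nat.cast_nonneg k)]
  have hL2 : ((((j+1:ℕ)):ℝ≥0∞) * (((i+j+2:ℕ)):ℝ≥0∞)^(m+1))⁻¹
      = ENNReal.ofReal ((((j+1:ℕ):ℝ) * ((i+j+2:ℕ):ℝ)^(m+1))⁻¹) := by
    conv_lhs => rw [show (((j+1:ℕ)):ℝ≥0∞) = (((j+1:ℕ)):ℝ≥0∞)^1 from (pow_one _).symm]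
    rw [hInv2 _ _ 1 (m+1) hc1 ha1]
    rw [pow_one]
  have hR1 : ((((j+1:ℕ)):ℝ≥0∞) * (((i+j+2:ℕ)):ℝ≥0∞))⁻¹
      = ENNReal.ofReal ((((j+1:ℕ):ℝ) * ((i+j+2:ℕ):ℝ))⁻¹) := by
    conv_lhs => rw [show (((j+1:ℕ)):ℝ≥0∞) = (((j+1:ℕ)):ℝ≥0∞)^1 from (pow_one _).symm,
      show (((i+j+2:ℕ)):ℝ≥0∞) = (((i+j+2:ℕ)):ℝ≥0∞)^1 from (pow_one _).symm]
    rw [hInv2 _ _ 1 1 hc1 ha1]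
    rw [pow_one, pow_one]
  have hnuSnn : (0:ℝ) ≤ ∑ l ∈ Finset.range (j+1), nuR m (i+1+l) :=
    Finset.sum_nonneg (fun l _ => nuR_nonneg _ _)
  rw [Finset.sum_congr rfl hL1, ← ENNReal.ofReal_sum_of_nonneg (fun k _ => by positivity),
    hL2, ← ENNReal.ofReal_natCast m, ← ENNReal.ofReal_mul (Nat.cast_nonneg m),
    ← ENNReal.ofReal_add (Finset.sum_nonneg (fun k _ => by positivity)) (by positivity),
    sum_nuE m (i+1) (j+1) hb1, hR1, hInv1 (j+1) 2 hc1,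
    ← ENNReal.ofReal_mul (by positivity), ← ENNReal.ofReal_mul (by positivity),
    ← ENNReal.ofReal_add (by positivity) (by positivity)]
  congr 1
  have hs := sum_nuR m (i+1) (j+1) hb1
  rw [show (i+1)+(j+1) = i+j+2 from by omega] at hs
  have h1 := preal m hm ((i+1:ℕ):ℝ) ((j+1:ℕ):ℝ) hbR hcR
  have hba : ((i+1:ℕ):ℝ) + ((j+1:ℕ):ℝ) = ((i+j+2:ℕ):ℝ) := by push_cast; ring
  rw [hba] at h1
  rw [hs]
  linear_combination h1

-- from s6.lean


noncomputable def E1 (s : ℕ) : ℝ≥0∞ := ∑' i:ℕ, ((((i+1:ℕ)):ℝ≥0∞)^s)⁻¹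
noncomputable def E2 (s₁ s₂ : ℕ) : ℝ≥0∞ :=
  ∑' p:ℕ×ℕ, ((((p.1+p.2+2:ℕ)):ℝ≥0∞)^s₁)⁻¹ * ((((p.1+1:ℕ)):ℝ≥0∞)^s₂)⁻¹

/-- telescoping tsum -/
lemma ts (m x0 : ℕ) (hm : 1 ≤ m) (hx : 1 ≤ x0) :
    ∑' i : ℕ, nuE m (x0 + i) = ((((x0:ℕ)):ℝ≥0∞)^m)⁻¹ := by
  set g : ℕ → ℝ := fun i => ((((x0+i:ℕ)):ℝ)^m)⁻¹ with hg
  have hterm : ∀ i, nuR m (x0+i) = g i - g (i+1) := by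
    intro i
    rw [nuR_eq m (x0+i) (by omega)]
    simp only [hg]
    norm_num [Nat.add_assoc]
  have hgz : Tendsto g atTop (𝓝 0) := by
    apply Filter.Tendsto.inv_tendsto_atTop
    apply (tendsto_pow_atTop (by omega : m ≠ 0)).comp
    apply tendsto_natCast_atTop_atTop.comp
    exact Filter.tendsto_atTop_mono (fun n => Nat.le_add_left n x0) tendsto_id
  have hsum : HasSum (fun i => nuR m (x0+i)) (g 0) := by
    rw [hasSum_iff_tendsto_nat_of_nonneg (fun i => nuR_nonneg _ _)]
    have hps : ∀ n, ∑ i ∈ Finset.range n, nuR m (x0+i) = g 0 - g n := by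
      intro n
      rw [Finset.sum_congr rfl (fun i _ => hterm i), Finset.sum_range_sub' g n]
    apply Tendsto.congr (fun n => (hps n).symm)
    simpa using tendsto_const_nhds.sub hgz
  calc ∑' i : ℕ, nuE m (x0 + i)
      = ∑' i : ℕ, ENNReal.ofReal (nuR m (x0+i)) :=
        tsum_congr (fun i => nuE_eq_ofReal m (x0+i) (by omega))
    _ = ENNReal.ofReal (∑' i, nuR m (x0+i)) :=
        (ENNReal.ofReal_tsum_of_nonneg (fun i => nuR_nonneg _ _) hsum.summable).symm
    _ = ENNReal.ofReal (g 0) := by rw [hsum.tsum_eq]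
    _ = ((((x0:ℕ)):ℝ≥0∞)^m)⁻¹ := by
        rw [hInv1 x0 m hx]
        simp [hg]

/-- reindexing strict-triangle sums -/
lemma lemR (F : ℕ → ℕ → ℝ≥0∞) :
    ∑' j:ℕ, ∑ l ∈ Finset.range j, F j l = ∑' p:ℕ×ℕ, F (p.1+p.2+1) p.1 := by
  have h1 : ∀ j:ℕ, ∑ l ∈ Finset.range j, F j l
      = ∑' i:ℕ, (fun q : ℕ×ℕ => if q.1 < q.2 then F q.2 q.1 else 0) (i, j) := by
    intro j
    rw [tsum_eq_sum (s := Finset.range j)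
      (by intro b hb; simp only [Finset.mem_range, not_lt] at hb; exact if_neg (by omega))]
    apply Finset.sum_congr rfl
    intro l hl
    exact (if_pos (Finset.mem_range.1 hl)).symm
  rw [tsum_congr h1, ENNReal.tsum_comm]
  rw [← ENNReal.tsum_prod' (f := fun q : ℕ×ℕ => if q.1 < q.2 then F q.2 q.1 else 0)]
  rw [← Function.Injective.tsum_eq (g := fun p : ℕ×ℕ => (p.1, p.1+p.2+1))
    (f := fun q : ℕ×ℕ => if q.1 < q.2 then F q.2 q.1 else 0)]
  · apply tsum_congr
    intro p
    simp only
    rw [if_pos (by omega)]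
  · intro p q h
    simp only [Prod.mk.injEq] at h
    have := h.1; have := h.2
    ext <;> omega
  · intro q hq
    simp only [Function.mem_support] at hq
    by_cases h : q.1 < q.2
    · refine ⟨(q.1, q.2 - q.1 - 1), ?_⟩
      obtain ⟨a, b⟩ := q
      simp only [Prod.mk.injEq]
      exact ⟨trivial, by omega⟩
    · exact absurd (by rw [if_neg h]) hq

-- from s7.lean


lemma ncast_ne_zero (x : ℕ) (hx : 1 ≤ x) : ((x:ℕ):ℝ≥0∞) ≠ 0 :=
  Nat.cast_ne_zero.2 (by omega)

lemma pow_inv_merge (x s t : ℕ) (hx : 1 ≤ x) :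
    ((((x:ℕ)):ℝ≥0∞)^s)⁻¹ * ((((x:ℕ)):ℝ≥0∞)^t)⁻¹ = ((((x:ℕ)):ℝ≥0∞)^(s+t))⁻¹ := by
  rw [pow_add, ENNReal.mul_inv (Or.inl (pow_ne_zero _ (ncast_ne_zero x hx)))
    (Or.inr (pow_ne_zero _ (ncast_ne_zero x hx)))]

/-- Part 2 evaluation. -/
lemma part2 (m : ℕ) (hm : 1 ≤ m) :
    ∑' p:ℕ×ℕ, (((((p.2+1:ℕ)):ℝ≥0∞))^2)⁻¹ * (∑ l ∈ Finset.range (p.2+1), nuE m (p.1+1+l))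
      = E2 2 m + E1 (m+2) := by
  rw [ENNReal.tsum_prod', ENNReal.tsum_comm]
  have h1 : ∀ j:ℕ, ∑' i:ℕ, (((((j+1:ℕ)):ℝ≥0∞))^2)⁻¹ * (∑ l ∈ Finset.range (j+1), nuE m (i+1+l))
      = ∑ l ∈ Finset.range (j+1), ((((j+1:ℕ)):ℝ≥0∞)^2)⁻¹ * ((((l+1:ℕ)):ℝ≥0∞)^m)⁻¹ := by
    intro j
    rw [ENNReal.tsum_mul_left, Summable.tsum_finsetSum (fun l _ => ENNReal.summable), Finset.mul_sum]
    apply Finset.sum_congr rfl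
    intro l _
    congr 1
    rw [tsum_congr (fun i => by rw [show i+1+l = (l+1)+i from by omega]),
      ts m (l+1) hm (by omega)]
  rw [tsum_congr h1]
  have h2 : ∀ j:ℕ, ∑ l ∈ Finset.range (j+1), ((((j+1:ℕ)):ℝ≥0∞)^2)⁻¹ * ((((l+1:ℕ)):ℝ≥0∞)^m)⁻¹
      = (∑ l ∈ Finset.range j, ((((j+1:ℕ)):ℝ≥0∞)^2)⁻¹ * ((((l+1:ℕ)):ℝ≥0∞)^m)⁻¹)
        + ((((j+1:ℕ)):ℝ≥0∞)^(m+2))⁻¹ := by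
    intro j
    rw [Finset.sum_range_succ]
    congr 1
    rw [pow_inv_merge (j+1) 2 m (by omega), show 2+m = m+2 from by omega]
  rw [tsum_congr h2, ENNReal.tsum_add]
  congr 1
  · rw [lemR (fun j l => ((((j+1:ℕ)):ℝ≥0∞)^2)⁻¹ * ((((l+1:ℕ)):ℝ≥0∞)^m)⁻¹)]
    rfl

/-- pointwise identity for the Q1 sum. -/
lemma q1pt (m i j : ℕ) (hm : 1 ≤ m) :
    ((((j+1:ℕ)):ℝ≥0∞) * (((i+j+2:ℕ)):ℝ≥0∞))⁻¹ * ((((i+1:ℕ)):ℝ≥0∞)^m)⁻¹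
      = ((((i+1:ℕ)):ℝ≥0∞)^(m+1))⁻¹ * ∑ l ∈ Finset.range (i+1), nuE 1 ((j+1)+l) := by
  have hb1 : (1:ℕ) ≤ i+1 := by omega
  have hc1 : (1:ℕ) ≤ j+1 := by omega
  have ha1 : (1:ℕ) ≤ i+j+2 := by omega
  have hbR : (0:ℝ) < ((i+1:ℕ):ℝ) := by exact_mod_cast hb1
  have hcR : (0:ℝ) < ((j+1:ℕ):ℝ) := by exact_mod_cast hc1
  have haR : (0:ℝ) < ((i+j+2:ℕ):ℝ) := by exact_mod_cast ha1
  have hCA : ((((j+1:ℕ)):ℝ≥0∞) * (((i+j+2:ℕ)):ℝ≥0∞))⁻¹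
      = ENNReal.ofReal ((((j+1:ℕ):ℝ) * ((i+j+2:ℕ):ℝ))⁻¹) := by
    conv_lhs => rw [show (((j+1:ℕ)):ℝ≥0∞) = (((j+1:ℕ)):ℝ≥0∞)^1 from (pow_one _).symm,
      show (((i+j+2:ℕ)):ℝ≥0∞) = (((i+j+2:ℕ)):ℝ≥0∞)^1 from (pow_one _).symm]
    rw [hInv2 _ _ 1 1 hc1 ha1, pow_one, pow_one]
  rw [hCA, hInv1 (i+1) m hb1, hInv1 (i+1) (m+1) hb1, sum_nuE 1 (j+1) (i+1) hc1,
    ← ENNReal.ofReal_mul (by positivity), ← ENNReal.ofReal_mul (by positivity)]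
  congr 1
  rw [sum_nuR 1 (j+1) (i+1) hc1, show (j+1)+(i+1) = i+j+2 from by omega]
  have hba : ((i+j+2:ℕ):ℝ) = ((i+1:ℕ):ℝ) + ((j+1:ℕ):ℝ) := by push_cast; ring
  rw [hba]
  field_simp
  ring

/-- Part 1 evaluation. -/
lemma part1 (m : ℕ) (hm : 1 ≤ m) (hfin : E2 (m+1) 1 ≠ ⊤) :
    ∑' p:ℕ×ℕ, ((((p.2+1:ℕ)):ℝ≥0∞) * (((p.1+p.2+2:ℕ)):ℝ≥0∞))⁻¹
        * (∑ l ∈ Finset.range (p.2+1), nuE m (p.1+1+l))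
      = E1 (m+2) := by
  have hD : ∀ p:ℕ×ℕ, ((((p.1+1:ℕ)):ℝ≥0∞)^m)⁻¹
      = ((((p.1+p.2+2:ℕ)):ℝ≥0∞)^m)⁻¹ + ∑ l ∈ Finset.range (p.2+1), nuE m (p.1+1+l) := by
    intro p
    rw [sum_nuE m (p.1+1) (p.2+1) (by omega), hInv1 (p.1+1) m (by omega),
      hInv1 (p.1+p.2+2) m (by omega),
      ← ENNReal.ofReal_add (by positivity)
        (Finset.sum_nonneg (fun l _ => nuR_nonneg m (p.1+1+l)))]
    congr 1
    rw [sum_nuR m (p.1+1) (p.2+1) (by omega), show (p.1+1)+(p.2+1) = p.1+p.2+2 from by omega]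
    ring
  have hQ : ∑' p:ℕ×ℕ, ((((p.2+1:ℕ)):ℝ≥0∞) * (((p.1+p.2+2:ℕ)):ℝ≥0∞))⁻¹ * ((((p.1+1:ℕ)):ℝ≥0∞)^m)⁻¹
      = (∑' p:ℕ×ℕ, ((((p.2+1:ℕ)):ℝ≥0∞) * (((p.1+p.2+2:ℕ)):ℝ≥0∞))⁻¹ * ((((p.1+p.2+2:ℕ)):ℝ≥0∞)^m)⁻¹)
        + ∑' p:ℕ×ℕ, ((((p.2+1:ℕ)):ℝ≥0∞) * (((p.1+p.2+2:ℕ)):ℝ≥0∞))⁻¹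
            * (∑ l ∈ Finset.range (p.2+1), nuE m (p.1+1+l)) := by
    rw [← ENNReal.tsum_add]
    exact tsum_congr (fun p => by rw [hD p, mul_add])
  have hQ1 : ∑' p:ℕ×ℕ, ((((p.2+1:ℕ)):ℝ≥0∞) * (((p.1+p.2+2:ℕ)):ℝ≥0∞))⁻¹ * ((((p.1+1:ℕ)):ℝ≥0∞)^m)⁻¹
      = E2 (m+1) 1 + E1 (m+2) := by
    have e0 : (∑' p:ℕ×ℕ, ((((p.2+1:ℕ)):ℝ≥0∞) * (((p.1+p.2+2:ℕ)):ℝ≥0∞))⁻¹ * ((((p.1+1:ℕ)):ℝ≥0∞)^m)⁻¹)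
        = ∑' p:ℕ×ℕ, ((((p.1+1:ℕ)):ℝ≥0∞)^(m+1))⁻¹ * ∑ l ∈ Finset.range (p.1+1), nuE 1 ((p.2+1)+l) :=
      tsum_congr (fun p => q1pt m p.1 p.2 hm)
    rw [e0, ENNReal.tsum_prod']
    have h1 : ∀ i:ℕ, ∑' j:ℕ, ((((i+1:ℕ)):ℝ≥0∞)^(m+1))⁻¹ * ∑ l ∈ Finset.range (i+1), nuE 1 ((j+1)+l)
        = ∑ l ∈ Finset.range (i+1), ((((i+1:ℕ)):ℝ≥0∞)^(m+1))⁻¹ * ((((l+1:ℕ)):ℝ≥0∞)^1)⁻¹ := by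
      intro i
      rw [ENNReal.tsum_mul_left, Summable.tsum_finsetSum (fun l _ => ENNReal.summable), Finset.mul_sum]
      apply Finset.sum_congr rfl
      intro l _
      congr 1
      rw [tsum_congr (fun j => by rw [show (j+1)+l = (l+1)+j from by omega]),
        ts 1 (l+1) le_rfl (by omega)]
    rw [tsum_congr h1]
    have h2 : ∀ i:ℕ, ∑ l ∈ Finset.range (i+1), ((((i+1:ℕ)):ℝ≥0∞)^(m+1))⁻¹ * ((((l+1:ℕ)):ℝ≥0∞)^1)⁻¹
        = (∑ l ∈ Finset.range i, ((((i+1:ℕ)):ℝ≥0∞)^(m+1))⁻¹ * ((((l+1:ℕ)):ℝ≥0∞)^1)⁻¹)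
          + ((((i+1:ℕ)):ℝ≥0∞)^(m+2))⁻¹ := by
      intro i
      rw [Finset.sum_range_succ]
      congr 1
      rw [pow_inv_merge (i+1) (m+1) 1 (by omega)]
    rw [tsum_congr h2, ENNReal.tsum_add]
    congr 1
    · rw [lemR (fun i l => ((((i+1:ℕ)):ℝ≥0∞)^(m+1))⁻¹ * ((((l+1:ℕ)):ℝ≥0∞)^1)⁻¹)]
      rfl
  have hQ2 : ∑' p:ℕ×ℕ, ((((p.2+1:ℕ)):ℝ≥0∞) * (((p.1+p.2+2:ℕ)):ℝ≥0∞))⁻¹ * ((((p.1+p.2+2:ℕ)):ℝ≥0∞)^m)⁻¹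
      = E2 (m+1) 1 := by
    have hpt : ∀ p:ℕ×ℕ, ((((p.2+1:ℕ)):ℝ≥0∞) * (((p.1+p.2+2:ℕ)):ℝ≥0∞))⁻¹ * ((((p.1+p.2+2:ℕ)):ℝ≥0∞)^m)⁻¹
        = ((((p.1+p.2+2:ℕ)):ℝ≥0∞)^(m+1))⁻¹ * ((((p.2+1:ℕ)):ℝ≥0∞)^1)⁻¹ := by
      intro p
      rw [ENNReal.mul_inv (Or.inl (ncast_ne_zero _ (by omega))) (Or.inr (ncast_ne_zero _ (by omega)))]
      rw [show ((((p.1+p.2+2:ℕ)):ℝ≥0∞))⁻¹ = ((((p.1+p.2+2:ℕ)):ℝ≥0∞)^1)⁻¹ from by rw [pow_one],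
        show ((((p.2+1:ℕ)):ℝ≥0∞))⁻¹ = ((((p.2+1:ℕ)):ℝ≥0∞)^1)⁻¹ from by rw [pow_one]]
      rw [mul_assoc, pow_inv_merge _ 1 m (by omega), show 1+m = m+1 from by omega]
      ring
    have e1 : (∑' p:ℕ×ℕ, ((((p.2+1:ℕ)):ℝ≥0∞) * (((p.1+p.2+2:ℕ)):ℝ≥0∞))⁻¹ * ((((p.1+p.2+2:ℕ)):ℝ≥0∞)^m)⁻¹)
        = ∑' p:ℕ×ℕ, ((((p.1+p.2+2:ℕ)):ℝ≥0∞)^(m+1))⁻¹ * ((((p.2+1:ℕ)):ℝ≥0∞)^1)⁻¹ :=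
      tsum_congr hpt
    rw [e1]
    unfold E2
    rw [← (Equiv.prodComm ℕ ℕ).tsum_eq
      (fun p : ℕ×ℕ => ((((p.1+p.2+2:ℕ)):ℝ≥0∞)^(m+1))⁻¹ * ((((p.1+1:ℕ)):ℝ≥0∞)^1)⁻¹)]
    apply tsum_congr
    intro p
    simp only [Equiv.prodComm_apply, Prod.fst_swap, Prod.snd_swap]
    rw [show p.2+p.1+2 = p.1+p.2+2 from by omega]
  rw [hQ1, hQ2] at hQ
  exact ((ENNReal.add_right_inj hfin).1 hQ).symm

-- from s8.lean

lemma term1_ne_top (x s : ℕ) (hx : 1 ≤ x) : ((((x:ℕ)):ℝ≥0∞)^s)⁻¹ ≠ ⊤ := by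
  rw [ENNReal.inv_ne_top]
  exact pow_ne_zero _ (ncast_ne_zero x hx)

/-- equiv for zetaR -/
def e1 : ℕ ≃ {k : ℕ // 1 ≤ k} where
  toFun i := ⟨i+1, by omega⟩
  invFun k := k.1 - 1
  left_inv i := by simp
  right_inv k := by
    obtain ⟨k, hk⟩ := k
    ext
    simp
    omega

/-- equiv for mzv2 -/
def e2 : (ℕ×ℕ) ≃ {p : ℕ × ℕ // 1 ≤ p.2 ∧ p.2 < p.1} where
  toFun p := ⟨(p.1+p.2+2, p.1+1), by constructor <;> omega⟩
  invFun q := (q.1.2 - 1, q.1.1 - q.1.2 - 1)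
  left_inv p := by
    obtain ⟨i, j⟩ := p
    simp
    omega
  right_inv q := by
    obtain ⟨⟨a, b⟩, h1, h2⟩ := q
    ext <;> (simp; omega)

lemma zetaR_eq (s : ℕ) : zetaR s = (E1 s).toReal := by
  rw [E1, ENNReal.tsum_toReal_eq (fun i => term1_ne_top (i+1) s (by omega))]
  rw [zetaR, ← e1.tsum_eq (fun k : {k:ℕ//1≤k} => (((k.1:ℕ):ℝ)^s)⁻¹)]
  apply tsum_congr
  intro i
  rw [ENNReal.toReal_inv, ENNReal.toReal_pow, ENNReal.toReal_natCast]
  rfl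

lemma mzv2_eq (s₁ s₂ : ℕ) : mzv2 s₁ s₂ = (E2 s₁ s₂).toReal := by
  have h1 : (E2 s₁ s₂).toReal
      = ∑' p:ℕ×ℕ, (((((p.1+p.2+2:ℕ)):ℝ))^s₁)⁻¹ * (((((p.1+1:ℕ)):ℝ))^s₂)⁻¹ := by
    have hne : ∀ p:ℕ×ℕ, ((((p.1+p.2+2:ℕ)):ℝ≥0∞)^s₁)⁻¹ * ((((p.1+1:ℕ)):ℝ≥0∞)^s₂)⁻¹ ≠ ⊤ :=
      fun p => ENNReal.mul_ne_top (term1_ne_top (p.1+p.2+2) s₁ (by omega))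
        (term1_ne_top (p.1+1) s₂ (by omega))
    rw [E2, ENNReal.tsum_toReal_eq hne]
    apply tsum_congr
    intro p
    rw [ENNReal.toReal_mul, ENNReal.toReal_inv, ENNReal.toReal_inv,
      ENNReal.toReal_pow, ENNReal.toReal_pow, ENNReal.toReal_natCast, ENNReal.toReal_natCast]
  have h2 : mzv2 s₁ s₂
      = ∑' p:ℕ×ℕ, ((((((p.1+p.2+2:ℕ)):ℝ))^s₁) * ((((p.1+1:ℕ)):ℝ))^s₂)⁻¹ := by
    rw [mzv2]
    exact (e2.tsum_eq (fun q : {p : ℕ × ℕ // 1 ≤ p.2 ∧ p.2 < p.1} =>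
      ((q.1.1 : ℝ) ^ s₁ * (q.1.2 : ℝ) ^ s₂)⁻¹)).symm
  rw [h1, h2]
  exact tsum_congr (fun p => by rw [mul_inv])

lemma E1fin (s : ℕ) (hs : 2 ≤ s) : E1 s ≠ ⊤ := by
  have hle : E1 s ≤ E1 2 := by
    apply Summable.tsum_le_tsum _ ENNReal.summable ENNReal.summable
    intro i
    apply ENNReal.inv_le_inv.2
    exact pow_le_pow_right₀ (Nat.one_le_cast.mpr (by omega)) hs
  apply ne_top_of_le_ne_top _ hle
  have hsumm : Summable (fun i:ℕ => ((((i+1:ℕ)):ℝ)^2)⁻¹) := by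
    have h0 : Summable (fun n:ℕ => 1/((n:ℝ))^2) := Real.summable_one_div_nat_pow.2 (by norm_num)
    have := (summable_nat_add_iff 1).2 h0
    simpa [one_div] using this
  have : E1 2 = ENNReal.ofReal (∑' i:ℕ, ((((i+1:ℕ)):ℝ)^2)⁻¹) := by
    rw [ENNReal.ofReal_tsum_of_nonneg (fun i => by positivity) hsumm, E1]
    exact tsum_congr (fun i => hInv1 (i+1) 2 (by omega))
  rw [this]
  exact ENNReal.ofReal_ne_top

lemma key_rineq (i j : ℕ) :
    ((((i+1:ℕ)):ℝ))^((3:ℝ)/2) * ((((j+1:ℕ)):ℝ))^((3:ℝ)/2)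
      ≤ ((((i+j+2:ℕ)):ℝ))^2 * (((i+1:ℕ)):ℝ) := by
  set x : ℝ := (((i+1:ℕ)):ℝ) with hx
  set y : ℝ := (((j+1:ℕ)):ℝ) with hy
  have hx1 : (1:ℝ) ≤ x := by rw [hx]; exact Nat.one_le_cast.mpr (by omega)
  have hy1 : (1:ℝ) ≤ y := by rw [hy]; exact Nat.one_le_cast.mpr (by omega)
  have hx0 : (0:ℝ) ≤ x := by linarith
  have hy0 : (0:ℝ) ≤ y := by linarith
  have hA : ((((i+j+2:ℕ)):ℝ)) = x + y := by rw [hx, hy]; push_cast; ring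
  rw [hA]
  have h1 : x^((3:ℝ)/2) * y^((3:ℝ)/2) = ((x*y)^3)^((1:ℝ)/2) := by
    rw [← Real.mul_rpow hx0 hy0, ← Real.rpow_natCast (x*y) 3,
      ← Real.rpow_mul (by positivity)]
    norm_num
  have h2 : (x+y)^2 * x = (((x+y)^2*x)^2)^((1:ℝ)/2) := by
    rw [← Real.rpow_natCast ((x+y)^2*x) 2, ← Real.rpow_mul (by positivity)]
    norm_num
  rw [h1, h2]
  apply Real.rpow_le_rpow (by positivity) _ (by norm_num)
  have hyx : y^3 ≤ (x+y)^3 := pow_le_pow_left₀ hy0 (by linarith) 3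
  have e3 : y^3 * x ≤ (x+y)^3 * (x+y) := mul_le_mul hyx (by linarith) hx0 (by positivity)
  calc (x*y)^3 = (y^3*x)*x^2 := by ring
    _ ≤ ((x+y)^3*(x+y))*x^2 := mul_le_mul_of_nonneg_right e3 (by positivity)
    _ = ((x+y)^2*x)^2 := by ring
lemma E2fin (s₁ s₂ : ℕ) (h1 : 2 ≤ s₁) (h2 : 1 ≤ s₂) : E2 s₁ s₂ ≠ ⊤ := by
  have hle : E2 s₁ s₂ ≤ E2 2 1 := by
    apply Summable.tsum_le_tsum _ ENNReal.summable ENNReal.summable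
    intro p
    apply mul_le_mul'
    · exact ENNReal.inv_le_inv.2 (pow_le_pow_right₀ (Nat.one_le_cast.mpr (by omega)) h1)
    · exact ENNReal.inv_le_inv.2 (pow_le_pow_right₀ (Nat.one_le_cast.mpr (by omega)) h2)
  apply ne_top_of_le_ne_top _ hle
  -- bound E2 2 1 by a product series
  have hsum1 : Summable (fun i:ℕ => ((((i+1:ℕ)):ℝ))^(-(3:ℝ)/2)) := by
    have h0 : Summable (fun n:ℕ => ((n:ℝ))^(-(3:ℝ)/2)) :=
      Real.summable_nat_rpow.2 (by norm_num)
    exact (summable_nat_add_iff 1).2 h0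
  have hg : Summable (fun p:ℕ×ℕ => ((((p.1+1:ℕ)):ℝ))^(-(3:ℝ)/2) * ((((p.2+1:ℕ)):ℝ))^(-(3:ℝ)/2)) :=
    Summable.mul_of_nonneg hsum1 hsum1 (fun i => Real.rpow_nonneg (by positivity) _)
      (fun j => Real.rpow_nonneg (by positivity) _)
  have hbound : ∀ p:ℕ×ℕ, ((((p.1+p.2+2:ℕ)):ℝ≥0∞)^2)⁻¹ * ((((p.1+1:ℕ)):ℝ≥0∞)^1)⁻¹
      ≤ ENNReal.ofReal (((((p.1+1:ℕ)):ℝ))^(-(3:ℝ)/2) * ((((p.2+1:ℕ)):ℝ))^(-(3:ℝ)/2)) := by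
    intro p
    rw [hInv1 _ 2 (by omega), hInv1 _ 1 (by omega),
      ← ENNReal.ofReal_mul (by positivity)]
    apply ENNReal.ofReal_le_ofReal
    have hkey := key_rineq p.1 p.2
    have hxpos : (0:ℝ) < (((p.1+1:ℕ)):ℝ) := by positivity
    have hypos : (0:ℝ) < (((p.2+1:ℕ)):ℝ) := by positivity
    have hApos : (0:ℝ) < (((p.1+p.2+2:ℕ)):ℝ) := by positivity
    rw [show (-(3:ℝ)/2) = -((3:ℝ)/2) from by norm_num,
      Real.rpow_neg (le_of_lt hxpos), Real.rpow_neg (le_of_lt hypos),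
      ← mul_inv, ← mul_inv, pow_one]
    apply inv_anti₀ (by positivity) hkey
  have hle2 : E2 2 1 ≤ ENNReal.ofReal
      (∑' p:ℕ×ℕ, ((((p.1+1:ℕ)):ℝ))^(-(3:ℝ)/2) * ((((p.2+1:ℕ)):ℝ))^(-(3:ℝ)/2)) := by
    calc E2 2 1 ≤ ∑' p:ℕ×ℕ, ENNReal.ofReal (((((p.1+1:ℕ)):ℝ))^(-(3:ℝ)/2) * ((((p.2+1:ℕ)):ℝ))^(-(3:ℝ)/2)) :=
          Summable.tsum_le_tsum hbound ENNReal.summable ENNReal.summable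
      _ = ENNReal.ofReal (∑' p:ℕ×ℕ, ((((p.1+1:ℕ)):ℝ))^(-(3:ℝ)/2) * ((((p.2+1:ℕ)):ℝ))^(-(3:ℝ)/2)) :=
          (ENNReal.ofReal_tsum_of_nonneg (fun p => by
            have h1 := Real.rpow_nonneg (show (0:ℝ) ≤ (((p.1+1:ℕ)):ℝ) by positivity) (-(3:ℝ)/2)
            have h2 := Real.rpow_nonneg (show (0:ℝ) ≤ (((p.2+1:ℕ)):ℝ) by positivity) (-(3:ℝ)/2)
            exact mul_nonneg h1 h2) hg).symm
  exact ne_top_of_le_ne_top ENNReal.ofReal_ne_top hle2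

-- from s9.lean

lemma inv_split (x y s t : ℕ) (hx : 1 ≤ x) :
    ((((x:ℕ)):ℝ≥0∞)^s * (((y:ℕ)):ℝ≥0∞)^t)⁻¹
      = ((((x:ℕ)):ℝ≥0∞)^s)⁻¹ * ((((y:ℕ)):ℝ≥0∞)^t)⁻¹ :=
  ENNReal.mul_inv (Or.inl (pow_ne_zero _ (ncast_ne_zero x hx)))
    (Or.inl (ENNReal.pow_ne_top (ENNReal.natCast_ne_top x)))

lemma E2_1_form (s : ℕ) :
    E2 s 1 = ∑' p:ℕ×ℕ, ((((p.2+1:ℕ)):ℝ≥0∞) * (((p.1+p.2+2:ℕ)):ℝ≥0∞)^s)⁻¹ := by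
  have hpt : ∀ p:ℕ×ℕ, ((((p.2+1:ℕ)):ℝ≥0∞) * (((p.1+p.2+2:ℕ)):ℝ≥0∞)^s)⁻¹
      = ((((p.1+p.2+2:ℕ)):ℝ≥0∞)^s)⁻¹ * ((((p.2+1:ℕ)):ℝ≥0∞)^1)⁻¹ := by
    intro p
    rw [ENNReal.mul_inv (Or.inl (ncast_ne_zero _ (by omega)))
      (Or.inl (ENNReal.natCast_ne_top _)), pow_one]
    ring
  have e0 : (∑' p:ℕ×ℕ, ((((p.2+1:ℕ)):ℝ≥0∞) * (((p.1+p.2+2:ℕ)):ℝ≥0∞)^s)⁻¹)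
      = ∑' p:ℕ×ℕ, ((((p.1+p.2+2:ℕ)):ℝ≥0∞)^s)⁻¹ * ((((p.2+1:ℕ)):ℝ≥0∞)^1)⁻¹ :=
    tsum_congr hpt
  rw [e0]
  unfold E2
  rw [← (Equiv.prodComm ℕ ℕ).tsum_eq
    (fun p : ℕ×ℕ => ((((p.1+p.2+2:ℕ)):ℝ≥0∞)^s)⁻¹ * ((((p.1+1:ℕ)):ℝ≥0∞)^1)⁻¹)]
  apply tsum_congr
  intro p
  simp only [Equiv.prodComm_apply, Prod.fst_swap, Prod.snd_swap]
  rw [show p.2+p.1+2 = p.1+p.2+2 from by omega]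

theorem Menn (m : ℕ) (hm : 1 ≤ m) :
    (∑ k ∈ Finset.Icc 2 (m+1), (k:ℝ≥0∞) * E2 k (m+2-k)) + (m:ℝ≥0∞) * E2 (m+1) 1
      = E2 2 m + 2 * E1 (m+2) := by
  have hS : (∑ k ∈ Finset.Icc 2 (m+1), (k:ℝ≥0∞) * E2 k (m+2-k))
      = ∑' p:ℕ×ℕ, ∑ k ∈ Finset.Icc 2 (m+1),
          (k:ℝ≥0∞) * ((((p.1+p.2+2:ℕ)):ℝ≥0∞)^k * (((p.1+1:ℕ)):ℝ≥0∞)^(m+2-k))⁻¹ := by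
    rw [Summable.tsum_finsetSum (fun k _ => ENNReal.summable)]
    apply Finset.sum_congr rfl
    intro k hk
    rw [ENNReal.tsum_mul_left]
    congr 1
    unfold E2
    exact tsum_congr (fun p => (inv_split (p.1+p.2+2) (p.1+1) k (m+2-k) (by omega)).symm)
  have hT : (m:ℝ≥0∞) * E2 (m+1) 1
      = ∑' p:ℕ×ℕ, (m:ℝ≥0∞) * ((((p.2+1:ℕ)):ℝ≥0∞) * (((p.1+p.2+2:ℕ)):ℝ≥0∞)^(m+1))⁻¹ := by
    rw [ENNReal.tsum_mul_left, E2_1_form (m+1)]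
  rw [hS, hT, ← ENNReal.tsum_add]
  have hpt : ∀ p:ℕ×ℕ, (∑ k ∈ Finset.Icc 2 (m+1),
        (k:ℝ≥0∞) * ((((p.1+p.2+2:ℕ)):ℝ≥0∞)^k * (((p.1+1:ℕ)):ℝ≥0∞)^(m+2-k))⁻¹)
      + (m:ℝ≥0∞) * ((((p.2+1:ℕ)):ℝ≥0∞) * (((p.1+p.2+2:ℕ)):ℝ≥0∞)^(m+1))⁻¹
      = ((((p.2+1:ℕ)):ℝ≥0∞) * (((p.1+p.2+2:ℕ)):ℝ≥0∞))⁻¹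
          * (∑ l ∈ Finset.range (p.2+1), nuE m (p.1+1+l))
        + ((((p.2+1:ℕ)):ℝ≥0∞)^2)⁻¹ * (∑ l ∈ Finset.range (p.2+1), nuE m (p.1+1+l)) :=
    fun p => pointE m p.1 p.2 hm
  have e0 : (∑' p:ℕ×ℕ, ((∑ k ∈ Finset.Icc 2 (m+1),
        (k:ℝ≥0∞) * ((((p.1+p.2+2:ℕ)):ℝ≥0∞)^k * (((p.1+1:ℕ)):ℝ≥0∞)^(m+2-k))⁻¹)
      + (m:ℝ≥0∞) * ((((p.2+1:ℕ)):ℝ≥0∞) * (((p.1+p.2+2:ℕ)):ℝ≥0∞)^(m+1))⁻¹))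
      = ∑' p:ℕ×ℕ, (((((p.2+1:ℕ)):ℝ≥0∞) * (((p.1+p.2+2:ℕ)):ℝ≥0∞))⁻¹
          * (∑ l ∈ Finset.range (p.2+1), nuE m (p.1+1+l))
        + ((((p.2+1:ℕ)):ℝ≥0∞)^2)⁻¹ * (∑ l ∈ Finset.range (p.2+1), nuE m (p.1+1+l))) :=
    tsum_congr hpt
  rw [e0, ENNReal.tsum_add, part1 m hm (E2fin (m+1) 1 (by omega) le_rfl), part2 m hm]
  ring

/-- For every integer `n ≥ 3`,
`∑_{k=2}^{n-1} k ζ(k, n-k) = ζ(2, n-2) + 2 ζ(n) - (n-2) ζ(n-1, 1)`. -/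
theorem weighted_sum_k (n : ℕ) (hn : 3 ≤ n) :
    ∑ k ∈ Finset.Icc 2 (n - 1), (k : ℝ) * mzv2 k (n - k)
      = mzv2 2 (n - 2) + 2 * zetaR n - ((n : ℝ) - 2) * mzv2 (n - 1) 1 := by
  obtain ⟨m, rfl⟩ : ∃ m, n = m + 2 := ⟨n - 2, by omega⟩
  have hm : 1 ≤ m := by omega
  rw [show m + 2 - 1 = m + 1 from by omega, show m + 2 - 2 = m from by omega,
    show ((m+2:ℕ):ℝ) - 2 = (m:ℝ) from by push_cast; ring]
  have hE2m : E2 2 m ≠ ⊤ := E2fin 2 m le_rfl hm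
  have hE1 : E1 (m+2) ≠ ⊤ := E1fin (m+2) (by omega)
  have hE2t : E2 (m+1) 1 ≠ ⊤ := E2fin (m+1) 1 (by omega) le_rfl
  have hkfin : ∀ k ∈ Finset.Icc 2 (m+1), (k:ℝ≥0∞) * E2 k (m+2-k) ≠ ⊤ := by
    intro k hk
    have hk' := Finset.mem_Icc.1 hk
    exact ENNReal.mul_ne_top (ENNReal.natCast_ne_top k)
      (E2fin k (m+2-k) (by omega) (by omega))
  have htr := congrArg ENNReal.toReal (Menn m hm)
  rw [ENNReal.toReal_add (ENNReal.sum_ne_top.2 hkfin)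
      (ENNReal.mul_ne_top (ENNReal.natCast_ne_top m) hE2t),
    ENNReal.toReal_add hE2m (ENNReal.mul_ne_top (by simp) hE1),
    ENNReal.toReal_sum hkfin, ENNReal.toReal_mul, ENNReal.toReal_mul,
    ENNReal.toReal_natCast, ENNReal.toReal_ofNat] at htr
  have htr2 : (∑ k ∈ Finset.Icc 2 (m+1), (k:ℝ) * (E2 k (m+2-k)).toReal)
      + (m:ℝ) * (E2 (m+1) 1).toReal
      = (E2 2 m).toReal + 2 * (E1 (m+2)).toReal := by
    rw [← htr]
    congr 1
    apply Finset.sum_congr rfl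
    intro k _
    rw [ENNReal.toReal_mul, ENNReal.toReal_natCast]
  have hgs : ∑ k ∈ Finset.Icc 2 (m+1), (k:ℝ) * mzv2 k (m+2-k)
      = ∑ k ∈ Finset.Icc 2 (m+1), (k:ℝ) * (E2 k (m+2-k)).toReal :=
    Finset.sum_congr rfl (fun k _ => by rw [mzv2_eq])
  rw [hgs, mzv2_eq 2 m, zetaR_eq (m+2), mzv2_eq (m+1) 1]
  linarith [htr2]
end

section
/- For every integer n ≥ 4, the weighted sum of double zeta values satisfies ∑_{k=2}^{n-1} k²·ζ(k, n−k) = 3ζ(2, n−2) + 2ζ(3, n−3) + 6ζ(n) − (2n−6)·ζ(n−2, 2) − n(n−2)·ζ(n−1, 1). -/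
open Finset


/-- shifted zeta term -/
noncomputable def zt (s : ℕ) (k : ℕ) : ℝ := (((k:ℝ)+1)^s)⁻¹

/-- Tornheim term over free pairs -/
noncomputable def tt (p q r : ℕ) (x : ℕ × ℕ) : ℝ :=
  (((x.1:ℝ)+1)^p * ((x.2:ℝ)+1)^q * ((x.1:ℝ)+(x.2:ℝ)+2)^r)⁻¹

noncomputable def TT (p q r : ℕ) : ℝ := ∑' x : ℕ × ℕ, tt p q r x

lemma zt_nonneg (s k : ℕ) : 0 ≤ zt s k := by unfold zt; positivity

lemma tt_nonneg (p q r : ℕ) (x : ℕ × ℕ) : 0 ≤ tt p q r x := by unfold tt; positivity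

/-- master summable family -/
lemma summable_master :
    Summable (fun x : ℕ × ℕ =>
      ((((x.1:ℝ)+1) * Real.sqrt ((x.1:ℝ)+1))⁻¹ * ((((x.2:ℝ)+1) * Real.sqrt ((x.2:ℝ)+1))⁻¹))) := by
  have h0 : Summable (fun k : ℕ => (((k:ℝ))^((3:ℝ)/2))⁻¹) :=
    Real.summable_nat_rpow_inv.2 (by norm_num)
  have h1 : Summable (fun k : ℕ => ((((k:ℝ))+1)^((3:ℝ)/2))⁻¹) := by
    have := (summable_nat_add_iff (f := fun k : ℕ => (((k:ℝ))^((3:ℝ)/2))⁻¹) 1).2 h0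
    refine this.congr fun k => ?_
    push_cast
    rfl
  have h2 : Summable (fun k : ℕ => (((k:ℝ)+1) * Real.sqrt ((k:ℝ)+1))⁻¹) := by
    refine h1.congr fun k => ?_
    congr 1
    have hpos : (0:ℝ) < (k:ℝ)+1 := by positivity
    rw [Real.sqrt_eq_rpow, show (3:ℝ)/2 = 1 + 1/2 by norm_num, Real.rpow_add hpos, Real.rpow_one]
  exact h2.mul_of_nonneg h2 (fun k => by positivity) (fun k => by positivity)

lemma sqrt_mul_sqrt_le (a b : ℕ) :
    Real.sqrt ((a:ℝ)+1) * Real.sqrt ((b:ℝ)+1) ≤ (a:ℝ)+(b:ℝ)+2 := by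
  have h1 : Real.sqrt ((a:ℝ)+1) * Real.sqrt ((b:ℝ)+1) = Real.sqrt (((a:ℝ)+1)*((b:ℝ)+1)) := by
    rw [← Real.sqrt_mul (by positivity)]
  rw [h1]
  have h2 : ((a:ℝ)+1)*((b:ℝ)+1) ≤ ((a:ℝ)+(b:ℝ)+2)^2 := by nlinarith [Nat.cast_nonneg (α := ℝ) a, Nat.cast_nonneg (α := ℝ) b]
  calc Real.sqrt (((a:ℝ)+1)*((b:ℝ)+1)) ≤ Real.sqrt (((a:ℝ)+(b:ℝ)+2)^2) := Real.sqrt_le_sqrt h2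
    _ = (a:ℝ)+(b:ℝ)+2 := Real.sqrt_sq (by positivity)

lemma summable_tt_A {p q r : ℕ} (hp : 1 ≤ p) (hq : 1 ≤ q) (hr : 1 ≤ r) :
    Summable (tt p q r) := by
  refine Summable.of_nonneg_of_le (fun x => tt_nonneg _ _ _ _) (fun x => ?_) summable_master
  obtain ⟨a, b⟩ := x
  set A : ℝ := (a:ℝ)+1 with hA
  set B : ℝ := (b:ℝ)+1 with hB
  have hA1 : (1:ℝ) ≤ A := by simp [hA]
  have hB1 : (1:ℝ) ≤ B := by simp [hB]
  have hApos : (0:ℝ) < A := by linarith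
  have hBpos : (0:ℝ) < B := by linarith
  have hM : (0:ℝ) < (a:ℝ)+(b:ℝ)+2 := by positivity
  have hsA : (0:ℝ) ≤ Real.sqrt A := Real.sqrt_nonneg _
  have hsB : (0:ℝ) ≤ Real.sqrt B := Real.sqrt_nonneg _
  rw [← mul_inv]
  apply inv_anti₀ (by positivity)
  have h1 : A ≤ A^p := le_self_pow₀ hA1 (by omega)
  have h2 : B ≤ B^q := le_self_pow₀ hB1 (by omega)
  have h3 : Real.sqrt A * Real.sqrt B ≤ ((a:ℝ)+(b:ℝ)+2) := sqrt_mul_sqrt_le a b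
  have h4 : ((a:ℝ)+(b:ℝ)+2) ≤ ((a:ℝ)+(b:ℝ)+2)^r := le_self_pow₀ (by linarith) (by omega)
  have hsA1 : (1:ℝ) ≤ Real.sqrt A * Real.sqrt B ∨ True := Or.inr trivial
  calc A * Real.sqrt A * (B * Real.sqrt B) = (A * B) * (Real.sqrt A * Real.sqrt B) := by ring
    _ ≤ (A^p * B^q) * ((a:ℝ)+(b:ℝ)+2) := by
        apply mul_le_mul _ h3 (by positivity) (by positivity)
        exact mul_le_mul h1 h2 (by positivity) (by positivity)
    _ ≤ (A^p * B^q) * ((a:ℝ)+(b:ℝ)+2)^r := by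
        apply mul_le_mul_of_nonneg_left h4 (by positivity)
    _ = A^p * B^q * ((a:ℝ)+(b:ℝ)+2)^r := by ring

lemma summable_tt_B' {q r : ℕ} (hq : 1 ≤ q) (hr : 2 ≤ r) :
    Summable (tt 0 q r) := by
  refine Summable.of_nonneg_of_le (fun x => tt_nonneg _ _ _ _) (fun x => ?_) summable_master
  obtain ⟨a, b⟩ := x
  set A : ℝ := (a:ℝ)+1 with hA
  set B : ℝ := (b:ℝ)+1 with hB
  set M : ℝ := (a:ℝ)+(b:ℝ)+2 with hM
  have hA1 : (1:ℝ) ≤ A := by simp [hA]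
  have hB1 : (1:ℝ) ≤ B := by simp [hB]
  have ha0 : (0:ℝ) ≤ (a:ℝ) := Nat.cast_nonneg a
  have hb0 : (0:ℝ) ≤ (b:ℝ) := Nat.cast_nonneg b
  have hM1 : (1:ℝ) ≤ M := by rw [hM]; linarith
  have hsA : (0:ℝ) ≤ Real.sqrt A := Real.sqrt_nonneg _
  have hsB : (0:ℝ) ≤ Real.sqrt B := Real.sqrt_nonneg _
  rw [← mul_inv]
  apply inv_anti₀ (by positivity)
  have h2 : B ≤ B^q := le_self_pow₀ hB1 (by omega)
  have h3 : Real.sqrt A * Real.sqrt B ≤ M := sqrt_mul_sqrt_le a b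
  have hAM : A ≤ M := by rw [hA, hM]; linarith
  have hM2 : M^2 ≤ M^r := pow_le_pow_right₀ (by linarith) hr
  have key : A * Real.sqrt A * (B * Real.sqrt B) ≤ B^q * M^2 := by
    have hsqA : Real.sqrt A ≤ Real.sqrt M := Real.sqrt_le_sqrt hAM
    have h5 : A * (Real.sqrt A * Real.sqrt B) ≤ M * M := by
      apply mul_le_mul hAM h3 (by positivity) (by linarith)
    calc A * Real.sqrt A * (B * Real.sqrt B) = (A * (Real.sqrt A * Real.sqrt B)) * B := by ring
      _ ≤ (M * M) * B^q := by
          apply mul_le_mul h5 h2 (by linarith) (by positivity)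
      _ = B^q * M^2 := by ring
  calc A * Real.sqrt A * (B * Real.sqrt B) ≤ B^q * M^2 := key
    _ ≤ B^q * M^r := by apply mul_le_mul_of_nonneg_left hM2 (by positivity)
    _ = A^0 * B^q * M^r := by ring

lemma summable_tt_B {p r : ℕ} (hp : 1 ≤ p) (hr : 2 ≤ r) :
    Summable (tt p 0 r) := by
  have h := (summable_tt_B' hp hr).comp_injective (Prod.swap_injective (α := ℕ) (β := ℕ))
  refine h.congr fun x => ?_
  obtain ⟨a,b⟩ := x
  show tt 0 p r (b, a) = tt p 0 r (a, b)
  unfold tt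
  simp only
  congr 1
  ring

lemma summable_zt {s : ℕ} (hs : 2 ≤ s) : Summable (zt s) := by
  have h0 : Summable (fun k : ℕ => (((k:ℝ))^(s:ℕ))⁻¹) :=
    (Real.summable_nat_pow_inv).2 (by omega)
  have h1 := (summable_nat_add_iff 1).2 h0
  refine h1.congr fun k => ?_
  unfold zt
  push_cast
  ring_nf

lemma summable_tt_C {p q : ℕ} (hp : 2 ≤ p) (hq : 2 ≤ q) :
    Summable (tt p q 0) := by
  have h := (summable_zt hp).mul_of_nonneg (summable_zt hq)
    (fun k => zt_nonneg _ _) (fun k => zt_nonneg _ _)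
  refine h.congr fun x => ?_
  unfold tt zt
  rw [pow_zero, mul_one, mul_inv]

/-- ℕ ≃ positive naturals -/
def eNat : ℕ ≃ {k : ℕ // 1 ≤ k} where
  toFun n := ⟨n+1, by omega⟩
  invFun k := k.1 - 1
  left_inv n := by simp
  right_inv k := by
    rcases k with ⟨k, hk⟩
    simp
    omega

lemma zetaR_eq_s1 (s : ℕ) : zetaR s = ∑' k : ℕ, zt s k := by
  unfold zetaR
  rw [← eNat.tsum_eq]
  refine tsum_congr fun k => ?_
  unfold zt
  simp [eNat]

/-- pairs (a,b) ↦ (a+b+2, b+1) -/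
def ePair : ℕ × ℕ ≃ {p : ℕ × ℕ // 1 ≤ p.2 ∧ p.2 < p.1} where
  toFun x := ⟨(x.1 + x.2 + 2, x.2 + 1), by omega⟩
  invFun p := (p.1.1 - p.1.2 - 1, p.1.2 - 1)
  left_inv x := by
    rcases x with ⟨a, b⟩
    simp
    omega
  right_inv p := by
    rcases p with ⟨⟨m, j⟩, h1, h2⟩
    simp only [Subtype.mk.injEq, Prod.mk.injEq]
    constructor <;> omega

lemma mzv2_eq_s1 (s t : ℕ) : mzv2 s t = ∑' x : ℕ × ℕ, tt 0 t s x := by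
  unfold mzv2
  rw [← ePair.tsum_eq]
  refine tsum_congr fun x => ?_
  rcases x with ⟨a, b⟩
  unfold tt
  simp only [ePair, Equiv.coe_fn_mk]
  push_cast
  congr 1
  ring

lemma TB1 (q r : ℕ) : TT 0 q r = mzv2 r q := (mzv2_eq_s1 r q).symm

lemma TB2 (p r : ℕ) : TT p 0 r = mzv2 r p := by
  rw [mzv2_eq_s1]
  unfold TT
  rw [← (Equiv.prodComm ℕ ℕ).tsum_eq (tt p 0 r)]
  refine tsum_congr fun x => ?_
  rcases x with ⟨a, b⟩
  unfold tt
  simp only [Equiv.prodComm_apply, Prod.swap_prod_mk]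
  congr 1
  ring

/-- Tornheim product value -/
lemma TP (p q : ℕ) (hp : 2 ≤ p) (hq : 2 ≤ q) : TT p q 0 = zetaR p * zetaR q := by
  have hzp := summable_zt hp
  have hzq := summable_zt hq
  have hprod : Summable (fun x : ℕ × ℕ => zt p x.1 * zt q x.2) :=
    hzp.mul_of_nonneg hzq (fun k => zt_nonneg _ _) (fun k => zt_nonneg _ _)
  unfold TT
  have he : ∀ x : ℕ × ℕ, tt p q 0 x = zt p x.1 * zt q x.2 := by
    intro x
    unfold tt zt
    rw [pow_zero, mul_one, mul_inv]
  rw [tsum_congr he, Summable.tsum_prod hprod]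
  rw [zetaR_eq_s1, zetaR_eq_s1]
  calc ∑' (a : ℕ), ∑' (b : ℕ), zt p a * zt q b
      = ∑' (a : ℕ), zt p a * ∑' (b : ℕ), zt q b := by
        refine tsum_congr fun a => ?_
        exact tsum_mul_left
    _ = (∑' k, zt p k) * ∑' k, zt q k := tsum_mul_right

/-- the stuffle relation -/
lemma stuffle (p q : ℕ) (hp : 2 ≤ p) (hq : 2 ≤ q) :
    zetaR p * zetaR q = mzv2 p q + mzv2 q p + zetaR (p+q) := by
  classical
  have hzp := summable_zt hp
  have hzq := summable_zt hq
  set f : ℕ × ℕ → ℝ := fun x => zt p x.1 * zt q x.2 with hf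
  have hfs : Summable f :=
    hzp.mul_of_nonneg hzq (fun k => zt_nonneg _ _) (fun k => zt_nonneg _ _)
  have hfnn : ∀ x, 0 ≤ f x := fun x => mul_nonneg (zt_nonneg _ _) (zt_nonneg _ _)
  set f1 : ℕ × ℕ → ℝ := fun x => if x.2 < x.1 then f x else 0 with hf1
  set f2 : ℕ × ℕ → ℝ := fun x => if x.1 < x.2 then f x else 0 with hf2
  set f3 : ℕ × ℕ → ℝ := fun x => if x.1 = x.2 then f x else 0 with hf3
  have hsplit : ∀ x, f x = f1 x + f2 x + f3 x := by
    intro x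
    simp only [hf1, hf2, hf3]
    rcases lt_trichotomy x.1 x.2 with h | h | h
    · rw [if_neg (by omega), if_pos h, if_neg (by omega)]; ring
    · rw [if_neg (by omega), if_neg (by omega), if_pos h]; ring
    · rw [if_pos h, if_neg (by omega), if_neg (by omega)]; ring
  have hb : ∀ (P : ℕ × ℕ → Prop) (_ : DecidablePred P),
      Summable (fun x => if P x then f x else 0) := by
    intro P hP
    refine Summable.of_nonneg_of_le (fun x => ?_) (fun x => ?_) hfs
    · by_cases h : P x <;> simp [h, hfnn x]
    · by_cases h : P x <;> simp [h, hfnn x]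
  have hb1 : Summable f1 := hb _ _
  have hb2 : Summable f2 := hb _ _
  have hb3 : Summable f3 := hb _ _
  have hsum : ∑' x, f x = (∑' x, f1 x) + (∑' x, f2 x) + (∑' x, f3 x) := by
    rw [tsum_congr hsplit, Summable.tsum_add (hb1.add hb2) hb3, Summable.tsum_add hb1 hb2]
  -- evaluate each piece
  have e1 : ∑' x, f1 x = mzv2 p q := by
    rw [mzv2_eq_s1]
    have hg : Function.Injective (fun y : ℕ × ℕ => (y.2 + y.1 + 1, y.2)) := by
      intro y1 y2 h
      simp only [Prod.mk.injEq] at h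
      obtain ⟨h1, h2⟩ := h
      ext <;> omega
    have hsupp : Function.support f1 ⊆ Set.range (fun y : ℕ × ℕ => (y.2 + y.1 + 1, y.2)) := by
      rintro ⟨x1, x2⟩ hx
      simp only [Function.mem_support, hf1] at hx
      have hlt : x2 < x1 := by by_contra h; rw [if_neg h] at hx; exact hx rfl
      exact ⟨(x1 - x2 - 1, x2), by simp <;> omega⟩
    rw [← hg.tsum_eq hsupp]
    refine tsum_congr fun y => ?_
    rcases y with ⟨a, b⟩
    simp only [hf1, hf, if_pos (by omega : (b + a + 1, b).2 < (b + a + 1, b).1)]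
    unfold zt tt
    push_cast
    rw [← mul_inv]
    congr 1
    ring
  have e2 : ∑' x, f2 x = mzv2 q p := by
    rw [← TB2 p q]
    unfold TT
    have hg : Function.Injective (fun y : ℕ × ℕ => (y.1, y.1 + y.2 + 1)) := by
      intro y1 y2 h
      simp only [Prod.mk.injEq] at h
      obtain ⟨h1, h2⟩ := h
      ext <;> omega
    have hsupp : Function.support f2 ⊆ Set.range (fun y : ℕ × ℕ => (y.1, y.1 + y.2 + 1)) := by
      rintro ⟨x1, x2⟩ hx
      simp only [Function.mem_support, hf2] at hx
      have hlt : x1 < x2 := by by_contra h; rw [if_neg h] at hx; exact hx rfl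
      exact ⟨(x1, x2 - x1 - 1), by simp <;> omega⟩
    rw [← hg.tsum_eq hsupp]
    refine tsum_congr fun y => ?_
    rcases y with ⟨a, b⟩
    simp only [hf2, hf, if_pos (by omega : (a, a + b + 1).1 < (a, a + b + 1).2)]
    unfold zt tt
    push_cast
    rw [← mul_inv]
    congr 1
    ring
  have e3 : ∑' x, f3 x = zetaR (p + q) := by
    rw [zetaR_eq_s1]
    have hg : Function.Injective (fun k : ℕ => (k, k)) := by
      intro y1 y2 h
      simpa using congrArg Prod.fst h
    have hsupp : Function.support f3 ⊆ Set.range (fun k : ℕ => (k, k)) := by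
      rintro ⟨x1, x2⟩ hx
      simp only [Function.mem_support, hf3] at hx
      have hlt : x1 = x2 := by by_contra h; rw [if_neg h] at hx; exact hx rfl
      exact ⟨x1, by simp <;> omega⟩
    rw [← hg.tsum_eq hsupp]
    refine tsum_congr fun k => ?_
    simp only [hf3, hf, if_pos rfl]
    unfold zt
    rw [← mul_inv, ← pow_add]
  calc zetaR p * zetaR q = ∑' x, f x := by
        rw [zetaR_eq_s1, zetaR_eq_s1, Summable.tsum_prod hfs, ← tsum_mul_right]
        refine tsum_congr fun a => ?_
        rw [← tsum_mul_left]
    _ = mzv2 p q + mzv2 q p + zetaR (p+q) := by rw [hsum, e1, e2, e3]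

/-- telescoping sum -/
lemma tele_hasSum (c : ℕ) :
    HasSum (fun a : ℕ => (((a:ℝ)+(c:ℝ)+1)⁻¹ - ((a:ℝ)+(c:ℝ)+2)⁻¹)) (((c:ℝ)+1)⁻¹) := by
  have hnn : ∀ a : ℕ, 0 ≤ (((a:ℝ)+(c:ℝ)+1)⁻¹ - ((a:ℝ)+(c:ℝ)+2)⁻¹) := by
    intro a
    have h1 : (0:ℝ) < (a:ℝ)+(c:ℝ)+1 := by positivity
    have h2 : ((a:ℝ)+(c:ℝ)+2)⁻¹ ≤ ((a:ℝ)+(c:ℝ)+1)⁻¹ := by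
      apply inv_anti₀ h1; linarith
    linarith
  rw [hasSum_iff_tendsto_nat_of_nonneg hnn]
  have hps : ∀ N : ℕ, ∑ a ∈ range N, (((a:ℝ)+(c:ℝ)+1)⁻¹ - ((a:ℝ)+(c:ℝ)+2)⁻¹)
      = ((c:ℝ)+1)⁻¹ - ((N:ℝ)+(c:ℝ)+1)⁻¹ := by
    intro N
    have h := Finset.sum_range_sub' (f := fun a : ℕ => ((a:ℝ)+(c:ℝ)+1)⁻¹) N
    calc ∑ a ∈ range N, (((a:ℝ)+(c:ℝ)+1)⁻¹ - ((a:ℝ)+(c:ℝ)+2)⁻¹)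
        = ∑ i ∈ range N, (((i:ℝ)+(c:ℝ)+1)⁻¹ - (((i+1:ℕ):ℝ)+(c:ℝ)+1)⁻¹) := by
          refine Finset.sum_congr rfl fun a _ => ?_
          push_cast
          ring_nf
      _ = (((0:ℕ):ℝ)+(c:ℝ)+1)⁻¹ - ((N:ℝ)+(c:ℝ)+1)⁻¹ := h
      _ = ((c:ℝ)+1)⁻¹ - ((N:ℝ)+(c:ℝ)+1)⁻¹ := by norm_num
  simp only [hps]
  have h1 : Filter.Tendsto (fun N : ℕ => ((N:ℝ)+(c:ℝ)+1)) Filter.atTop Filter.atTop := by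
    have h0 := tendsto_natCast_atTop_atTop (R := ℝ)
    have h2 := Filter.tendsto_atTop_add_const_right Filter.atTop ((c:ℝ)+1) h0
    simpa [add_assoc] using h2
  have h2 := h1.inv_tendsto_atTop
  have h3 := Filter.Tendsto.const_sub (((c:ℝ)+1)⁻¹) h2
  simpa using h3

noncomputable def Hh (b : ℕ) : ℝ := ∑ i ∈ range (b+1), ((i:ℝ)+1)⁻¹

lemma Hsum (b : ℕ) : ∑' a : ℕ, (((a:ℝ)+1)⁻¹ - ((a:ℝ)+(b:ℝ)+2)⁻¹) = Hh b := by
  have step : ∀ a : ℕ, ((a:ℝ)+1)⁻¹ - ((a:ℝ)+(b:ℝ)+2)⁻¹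
      = ∑ i ∈ range (b+1), (((a:ℝ)+(i:ℝ)+1)⁻¹ - ((a:ℝ)+(i:ℝ)+2)⁻¹) := by
    intro a
    have h := Finset.sum_range_sub' (f := fun i : ℕ => ((a:ℝ)+(i:ℝ)+1)⁻¹) (b+1)
    have h2 : ∑ i ∈ range (b+1), (((a:ℝ)+(i:ℝ)+1)⁻¹ - ((a:ℝ)+(i:ℝ)+2)⁻¹)
        = ∑ i ∈ range (b+1), ((fun i : ℕ => ((a:ℝ)+(i:ℝ)+1)⁻¹) i - (fun i : ℕ => ((a:ℝ)+(i:ℝ)+1)⁻¹) (i+1)) := by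
      refine Finset.sum_congr rfl fun i _ => ?_
      push_cast
      ring_nf
    rw [h2, h]
    push_cast
    ring_nf
  rw [tsum_congr step, Summable.tsum_finsetSum (fun i _ => (tele_hasSum i).summable)]
  unfold Hh
  exact Finset.sum_congr rfl fun i _ => (tele_hasSum i).tsum_eq

/-- reorganization of a double zeta as an iterated sum with inner finite sum -/
lemma reorg (s t : ℕ) (hs : 2 ≤ s) (ht : 1 ≤ t) :
    mzv2 s t = ∑' c : ℕ, ((((c:ℝ)+1)^s)⁻¹ * ∑ i ∈ range c, (((i:ℝ)+1)^t)⁻¹)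
    ∧ Summable (fun c : ℕ => (((c:ℝ)+1)^s)⁻¹ * ∑ i ∈ range c, (((i:ℝ)+1)^t)⁻¹) := by
  classical
  set G : ℕ × ℕ → ℝ := fun x => if x.2 < x.1 then (((x.1:ℝ)+1)^s * ((x.2:ℝ)+1)^t)⁻¹ else 0 with hG
  have hg : Function.Injective (fun y : ℕ × ℕ => (y.1 + y.2 + 1, y.2)) := by
    intro y1 y2 h
    simp only [Prod.mk.injEq] at h
    obtain ⟨h1, h2⟩ := h
    ext <;> omega
  have hsupp : ∀ x ∉ Set.range (fun y : ℕ × ℕ => (y.1 + y.2 + 1, y.2)), G x = 0 := by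
    rintro ⟨x1, x2⟩ hx
    simp only [hG]
    rw [if_neg]
    intro hlt
    exact hx ⟨(x1 - x2 - 1, x2), by simp <;> omega⟩
  have hcomp : ∀ y : ℕ × ℕ, G (y.1 + y.2 + 1, y.2) = tt 0 t s y := by
    intro y
    simp only [hG, if_pos (by omega : (y.1 + y.2 + 1, y.2).2 < (y.1 + y.2 + 1, y.2).1)]
    unfold tt
    push_cast
    congr 1
    ring
  have hGsum : Summable G := by
    rw [← hg.summable_iff (by intro x hx; exact hsupp x hx)]
    exact (summable_tt_B' ht hs).congr (fun y => (hcomp y).symm)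
  have hsupp2 : Function.support G ⊆ Set.range (fun y : ℕ × ℕ => (y.1 + y.2 + 1, y.2)) := by
    intro x hx
    by_contra h
    exact hx (hsupp x h)
  have htsum : ∑' x, G x = mzv2 s t := by
    rw [← hg.tsum_eq hsupp2, mzv2_eq_s1]
    exact tsum_congr hcomp
  have hinner : ∀ c : ℕ, ∑' i : ℕ, G (c, i)
      = (((c:ℝ)+1)^s)⁻¹ * ∑ i ∈ range c, (((i:ℝ)+1)^t)⁻¹ := by
    intro c
    rw [tsum_eq_sum (s := range c) (by
      intro i hi
      simp only [hG]
      rw [if_neg]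
      simpa using hi)]
    rw [Finset.mul_sum]
    refine Finset.sum_congr rfl fun i hi => ?_
    simp only [hG]
    rw [if_pos (by simpa using hi), mul_inv]
  have hmarg : Summable (fun c : ℕ => (((c:ℝ)+1)^s)⁻¹ * ∑ i ∈ range c, (((i:ℝ)+1)^t)⁻¹) :=
    (Summable.prod hGsum).congr hinner
  constructor
  · rw [← htsum, Summable.tsum_prod hGsum]
    exact tsum_congr hinner
  · exact hmarg

/-- evaluation of the Tornheim sum T(1,q;1) via harmonic numbers -/
lemma T1q1 (q : ℕ) (hq : 1 ≤ q) : TT 1 q 1 = mzv2 (q+1) 1 + zetaR (q+2) := by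
  have hsummable : Summable (tt 1 q 1) := summable_tt_A le_rfl hq le_rfl
  have hswap : Summable (fun x : ℕ × ℕ => tt 1 q 1 ((Equiv.prodComm ℕ ℕ) x)) :=
    hsummable.comp_injective (Equiv.prodComm ℕ ℕ).injective
  unfold TT
  rw [← (Equiv.prodComm ℕ ℕ).tsum_eq (tt 1 q 1), Summable.tsum_prod hswap]
  have hinner : ∀ b : ℕ, (∑' a : ℕ, tt 1 q 1 ((Equiv.prodComm ℕ ℕ) (b, a)))
      = (((b:ℝ)+1)^(q+1))⁻¹ * Hh b := by
    intro b
    have hpt : ∀ a : ℕ, tt 1 q 1 ((Equiv.prodComm ℕ ℕ) (b, a))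
        = (((b:ℝ)+1)^(q+1))⁻¹ * (((a:ℝ)+1)⁻¹ - ((a:ℝ)+(b:ℝ)+2)⁻¹) := by
      intro a
      simp only [Equiv.prodComm_apply, Prod.swap_prod_mk]
      unfold tt
      simp only [pow_one]
      have h1 : (0:ℝ) < (a:ℝ)+1 := by positivity
      have h2 : (0:ℝ) < (b:ℝ)+1 := by positivity
      have h3 : (0:ℝ) < (a:ℝ)+(b:ℝ)+2 := by positivity
      have h4 : ((b:ℝ)+1)^q ≠ 0 := by positivity
      have h5 : ((b:ℝ)+1)^(q+1) ≠ 0 := by positivity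
      field_simp
      ring
    rw [tsum_congr hpt, tsum_mul_left, Hsum b]
  rw [tsum_congr hinner]
  have hsplit : ∀ b : ℕ, (((b:ℝ)+1)^(q+1))⁻¹ * Hh b
      = (((b:ℝ)+1)^(q+1))⁻¹ * (∑ i ∈ range b, (((i:ℝ)+1)^1)⁻¹) + zt (q+2) b := by
    intro b
    unfold Hh zt
    rw [Finset.sum_range_succ]
    have hp : ((b:ℝ)+1)^(q+2) = ((b:ℝ)+1)^(q+1) * ((b:ℝ)+1) := by rw [pow_succ]
    rw [hp, mul_inv]
    simp only [pow_one]
    ring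
  rw [tsum_congr hsplit]
  obtain ⟨hre, hrs⟩ := reorg (q+1) 1 (by omega) le_rfl
  rw [Summable.tsum_add (by exact hrs) (summable_zt (by omega)), ← hre, ← zetaR_eq_s1]

/-- pointwise Tornheim recursion -/
lemma tt_rec (p q r : ℕ) (x : ℕ × ℕ) :
    tt (p+1) (q+1) r x = tt p (q+1) (r+1) x + tt (p+1) q (r+1) x := by
  rcases x with ⟨a, b⟩
  unfold tt
  simp only
  have hA : (0:ℝ) < (a:ℝ)+1 := by positivity
  have hB : (0:ℝ) < (b:ℝ)+1 := by positivity
  have hM : (0:ℝ) < (a:ℝ)+(b:ℝ)+2 := by positivity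
  have e1 : ((a:ℝ)+1)^(p+1) = ((a:ℝ)+1)^p * ((a:ℝ)+1) := by rw [pow_succ]
  have e2 : ((b:ℝ)+1)^(q+1) = ((b:ℝ)+1)^q * ((b:ℝ)+1) := by rw [pow_succ]
  have e3 : ((a:ℝ)+(b:ℝ)+2)^(r+1) = ((a:ℝ)+(b:ℝ)+2)^r * ((a:ℝ)+(b:ℝ)+2) := by rw [pow_succ]
  have hAp : ((a:ℝ)+1)^p ≠ 0 := by positivity
  have hBq : ((b:ℝ)+1)^q ≠ 0 := by positivity
  have hMr : ((a:ℝ)+(b:ℝ)+2)^r ≠ 0 := by positivity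
  rw [e1, e2, e3]
  field_simp
  ring

lemma TT_rec (p q r : ℕ) (h1 : Summable (tt p (q+1) (r+1))) (h2 : Summable (tt (p+1) q (r+1))) :
    TT (p+1) (q+1) r = TT p (q+1) (r+1) + TT (p+1) q (r+1) := by
  unfold TT
  rw [← Summable.tsum_add h1 h2]
  exact tsum_congr (tt_rec p q r)

/-- closed form for T(1,q;r) -/
lemma M1 : ∀ q : ℕ, 1 ≤ q → ∀ r : ℕ, 1 ≤ r →
    TT 1 q r = (∑ i ∈ range q, mzv2 (r+1+i) (q-i)) + mzv2 (r+q) 1 := by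
  intro q hq
  induction q, hq using Nat.le_induction with
  | base =>
    intro r hr
    have h := TT_rec 0 0 r (summable_tt_B' le_rfl (by omega)) (summable_tt_B le_rfl (by omega))
    rw [h, TB1, TB2]
    simp
  | succ q hq ih =>
    intro r hr
    have h := TT_rec 0 q r (summable_tt_B' (by omega) (by omega)) (summable_tt_A le_rfl hq (by omega))
    rw [h, TB1, ih (r+1) (by omega)]
    rw [Finset.sum_range_succ' (fun i => mzv2 (r+1+i) (q+1-i)) q]
    have hsum : ∑ i ∈ range q, mzv2 (r+1+(i+1)) (q+1-(i+1)) = ∑ i ∈ range q, mzv2 (r+1+1+i) (q-i) := by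
      refine Finset.sum_congr rfl fun i _ => ?_
      congr 1 <;> omega
    rw [hsum]
    have h1 : r+1+0 = r+1 := by omega
    have h2 : q+1-0 = q+1 := by omega
    rw [h1, h2]
    have h3 : r+1+q = r+(q+1) := by omega
    rw [h3]
    ring

/-- closed form for T(2,q;r) -/
lemma CF2 : ∀ q : ℕ, 1 ≤ q → ∀ r : ℕ, 2 ≤ q + r →
    TT 2 q r = (∑ j ∈ range q, ((j:ℝ)+1) * mzv2 (r+2+j) (q-j))
      + (q:ℝ) * mzv2 (r+q+1) 1 + mzv2 (r+q) 2 := by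
  intro q hq
  induction q, hq using Nat.le_induction with
  | base =>
    intro r hr
    have hr1 : 1 ≤ r := by omega
    have h := TT_rec 1 0 r (summable_tt_A le_rfl le_rfl (by omega)) (summable_tt_B (by omega) (by omega))
    rw [h, TB2, M1 1 le_rfl (r+1) (by omega)]
    simp only [Finset.sum_range_one]
    rw [show r+1+1+0 = r+2 from by omega, show r+1+1 = r+2 from by omega,
        show r+0+1 = r+1 from by omega, show r+2+0 = r+2 from by omega,
        show r+1+0 = r+1 from by omega]
    push_cast
    ring
  | succ q hq ih =>
    intro r hr
    have h := TT_rec 1 q r (summable_tt_A le_rfl (by omega) (by omega)) (summable_tt_A (by omega) hq (by omega))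
    rw [h, M1 (q+1) (by omega) (r+1) (by omega), ih (r+1) (by omega)]
    rw [Finset.sum_range_succ' (fun i => mzv2 (r+1+1+i) (q+1-i)) q]
    rw [Finset.sum_range_succ' (fun j => ((j:ℝ)+1) * mzv2 (r+2+j) (q+1-j)) q]
    have e1 : ∑ i ∈ range q, mzv2 (r+1+1+(i+1)) (q+1-(i+1)) = ∑ i ∈ range q, mzv2 (r+1+2+i) (q-i) := by
      refine Finset.sum_congr rfl fun i _ => ?_
      congr 1 <;> omega
    have e2 : ∑ j ∈ range q, (((j+1:ℕ):ℝ)+1) * mzv2 (r+2+(j+1)) (q+1-(j+1))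
        = ∑ j ∈ range q, (((j:ℝ)+1)+1) * mzv2 (r+1+2+j) (q-j) := by
      refine Finset.sum_congr rfl fun j _ => ?_
      have : r+2+(j+1) = r+1+2+j := by omega
      rw [this, show q+1-(j+1) = q-j from by omega]
      push_cast
      ring
    rw [e1, e2]
    have e3 : ∑ j ∈ range q, (((j:ℝ)+1)+1) * mzv2 (r+1+2+j) (q-j)
        = (∑ j ∈ range q, mzv2 (r+1+2+j) (q-j)) + ∑ j ∈ range q, ((j:ℝ)+1) * mzv2 (r+1+2+j) (q-j) := by
      rw [← Finset.sum_add_distrib]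
      refine Finset.sum_congr rfl fun j _ => ?_
      ring
    rw [e3]
    have h1 : r+1+1+0 = r+2 := by omega
    have h2 : r+1+(q+1) = r+q+2 := by omega
    have h3 : r+1+q+1 = r+q+2 := by omega
    have h4 : r+1+q = r+q+1 := by omega
    have h5 : r+2+0 = r+2 := by omega
    have h6 : q+1-0 = q+1 := by omega
    rw [h1, h2, h3, h4, h5, h6, show r+(q+1)+1 = r+q+2 from by omega,
        show r+(q+1) = r+q+1 from by omega]
    push_cast
    ring

/-- closed form for T(3,q;r) -/
lemma CF3 : ∀ q : ℕ, 1 ≤ q → ∀ r : ℕ, 2 ≤ q + r →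
    TT 3 q r = (∑ j ∈ range q, (((j:ℝ)+1) * ((j:ℝ)+2) / 2) * mzv2 (r+3+j) (q-j))
      + ((q:ℝ) * ((q:ℝ)+1) / 2) * mzv2 (r+q+2) 1 + (q:ℝ) * mzv2 (r+q+1) 2 + mzv2 (r+q) 3 := by
  intro q hq
  induction q, hq using Nat.le_induction with
  | base =>
    intro r hr
    have h := TT_rec 2 0 r (summable_tt_A (by omega) le_rfl (by omega)) (summable_tt_B (by omega) (by omega))
    rw [h, TB2, CF2 1 le_rfl (r+1) (by omega)]
    simp only [Finset.sum_range_one]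
    rw [show r+1+2+0 = r+3 from by omega, show r+1+1+1 = r+3 from by omega,
        show r+1+1 = r+2 from by omega, show r+3+0 = r+3 from by omega,
        show r+1+2 = r+3 from by omega]
    push_cast
    ring
  | succ q hq ih =>
    intro r hr
    have h := TT_rec 2 q r (summable_tt_A (by omega) (by omega) (by omega)) (summable_tt_A (by omega) hq (by omega))
    rw [h, CF2 (q+1) (by omega) (r+1) (by omega), ih (r+1) (by omega)]
    rw [Finset.sum_range_succ' (fun j => ((j:ℝ)+1) * mzv2 (r+1+2+j) (q+1-j)) q]
    rw [Finset.sum_range_succ' (fun j => (((j:ℝ)+1) * ((j:ℝ)+2) / 2) * mzv2 (r+3+j) (q+1-j)) q]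
    have e1 : ∑ j ∈ range q, (((j+1:ℕ):ℝ)+1) * mzv2 (r+1+2+(j+1)) (q+1-(j+1))
        = ∑ j ∈ range q, (((j:ℝ)+2)) * mzv2 (r+1+3+j) (q-j) := by
      refine Finset.sum_congr rfl fun j _ => ?_
      rw [show r+1+2+(j+1) = r+1+3+j from by omega, show q+1-(j+1) = q-j from by omega]
      push_cast
      ring
    have e2 : ∑ j ∈ range q, ((((j+1:ℕ):ℝ)+1) * (((j+1:ℕ):ℝ)+2) / 2) * mzv2 (r+3+(j+1)) (q+1-(j+1))
        = ∑ j ∈ range q, ((((j:ℝ)+2) * (((j:ℝ))+3) / 2)) * mzv2 (r+1+3+j) (q-j) := by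
      refine Finset.sum_congr rfl fun j _ => ?_
      rw [show r+3+(j+1) = r+1+3+j from by omega, show q+1-(j+1) = q-j from by omega]
      push_cast
      ring
    rw [e1, e2]
    have e3 : ∑ j ∈ range q, ((((j:ℝ)+2) * (((j:ℝ))+3) / 2)) * mzv2 (r+1+3+j) (q-j)
        = (∑ j ∈ range q, ((j:ℝ)+2) * mzv2 (r+1+3+j) (q-j))
          + ∑ j ∈ range q, (((j:ℝ)+1) * ((j:ℝ)+2) / 2) * mzv2 (r+1+3+j) (q-j) := by
      rw [← Finset.sum_add_distrib]
      refine Finset.sum_congr rfl fun j _ => ?_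
      ring
    rw [e3]
    rw [show r+1+2+0 = r+3 from by omega, show q+1-0 = q+1 from by omega,
        show r+3+0 = r+3 from by omega,
        show r+1+(q+1)+1 = r+q+3 from by omega, show r+1+(q+1) = r+q+2 from by omega,
        show r+1+q+2 = r+q+3 from by omega, show r+1+q+1 = r+q+2 from by omega,
        show r+1+q = r+q+1 from by omega,
        show r+(q+1)+2 = r+q+3 from by omega, show r+(q+1)+1 = r+q+2 from by omega,
        show r+(q+1) = r+q+1 from by omega]
    push_cast
    ring

/-- Euler's sum theorem in depth two -/
lemma E1_s1 (q : ℕ) (hq : 1 ≤ q) : ∑ i ∈ range q, mzv2 (2+i) (q-i) = zetaR (q+2) := by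
  have h1 := M1 q hq 1 le_rfl
  have h2 := T1q1 q hq
  have e : ∑ i ∈ range q, mzv2 (1+1+i) (q-i) = ∑ i ∈ range q, mzv2 (2+i) (q-i) := by
    refine Finset.sum_congr rfl fun i _ => ?_
    rw [show 1+1+i = 2+i from by omega]
  rw [e, show 1+q = q+1 from by omega] at h1
  rw [h2] at h1
  linarith

/-- For every integer `n ≥ 4`,
`∑_{k=2}^{n-1} k² ζ(k, n-k)
  = 3 ζ(2, n-2) + 2 ζ(3, n-3) + 6 ζ(n) - (2n-6) ζ(n-2, 2) - n(n-2) ζ(n-1, 1)`. -/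
theorem weighted_sum_k_sq (n : ℕ) (hn : 4 ≤ n) :
    ∑ k ∈ Finset.Icc 2 (n - 1), (k : ℝ) ^ 2 * mzv2 k (n - k)
      = 3 * mzv2 2 (n - 2) + 2 * mzv2 3 (n - 3) + 6 * zetaR n
        - (2 * (n : ℝ) - 6) * mzv2 (n - 2) 2
        - (n : ℝ) * ((n : ℝ) - 2) * mzv2 (n - 1) 1 := by
  obtain ⟨m, rfl⟩ : ∃ m, n = m + 4 := ⟨n - 4, by omega⟩
  have hIcc : Finset.Icc 2 (m+4-1) = Finset.Ico 2 (m+4) := by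
    ext x
    simp only [Finset.mem_Icc, Finset.mem_Ico]
    omega
  rw [hIcc, Finset.sum_Ico_eq_sum_range]
  rw [show m+4-2 = m+2 from by omega, show m+4-3 = m+1 from by omega,
      show m+4-1 = m+3 from by omega]
  have hL : ∑ i ∈ range (m+2), (((2+i:ℕ)):ℝ)^2 * mzv2 (2+i) (m+4-(2+i))
      = ∑ i ∈ range (m+2), ((i:ℝ)+2)^2 * mzv2 (2+i) (m+2-i) := by
    refine Finset.sum_congr rfl fun i _ => ?_
    rw [show m+4-(2+i) = m+2-i from by omega]
    push_cast
    ring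
  rw [hL]
  -- relations
  have hE1 : ∑ i ∈ range (m+2), mzv2 (2+i) (m+2-i) = zetaR (m+4) := by
    have h := E1_s1 (m+2) (by omega)
    rwa [show m+2+2 = m+4 from by omega] at h
  have hS2 : TT 2 (m+2) 0 = (∑ j ∈ range (m+2), ((j:ℝ)+1) * mzv2 (2+j) (m+2-j))
      + ((m:ℝ)+2) * mzv2 (m+3) 1 + mzv2 (m+2) 2 := by
    have h := CF2 (m+2) (by omega) 0 (by omega)
    rw [show 0+(m+2)+1 = m+3 from by omega, show 0+(m+2) = m+2 from by omega] at h
    have e : ∑ j ∈ range (m+2), ((j:ℝ)+1) * mzv2 (0+2+j) (m+2-j)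
        = ∑ j ∈ range (m+2), ((j:ℝ)+1) * mzv2 (2+j) (m+2-j) := by
      refine Finset.sum_congr rfl fun j _ => ?_
      rw [show 0+2+j = 2+j from by omega]
    rw [e] at h
    rw [h]
    push_cast
    ring
  have hTP2 : TT 2 (m+2) 0 = zetaR 2 * zetaR (m+2) := TP 2 (m+2) (by omega) (by omega)
  have hSt2 : zetaR 2 * zetaR (m+2) = mzv2 2 (m+2) + mzv2 (m+2) 2 + zetaR (m+4) := by
    have h := stuffle 2 (m+2) (by omega) (by omega)
    rwa [show 2+(m+2) = m+4 from by omega] at h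
  have hsplit : ∑ i ∈ range (m+2), ((i:ℝ)+2)^2 * mzv2 (2+i) (m+2-i)
      = 2*(∑ i ∈ range (m+2), ((i:ℝ)*((i:ℝ)+1)/2) * mzv2 (2+i) (m+2-i))
        + 3*(∑ i ∈ range (m+2), ((i:ℝ)+1) * mzv2 (2+i) (m+2-i))
        + ∑ i ∈ range (m+2), mzv2 (2+i) (m+2-i) := by
    rw [Finset.mul_sum, Finset.mul_sum, ← Finset.sum_add_distrib, ← Finset.sum_add_distrib]
    refine Finset.sum_congr rfl fun i _ => ?_
    ring
  rw [hsplit]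
  rcases Nat.eq_zero_or_pos m with hm | hm
  · -- n = 4
    subst hm
    simp only [Finset.sum_range_succ, Finset.sum_range_zero] at hE1 hS2 hsplit ⊢
    norm_num at hE1 hS2 hsplit ⊢
    linarith [hE1, hS2, hTP2, hSt2]
  · -- n ≥ 5
    have hS3 : TT 3 (m+1) 0 = (∑ j ∈ range (m+1), (((j:ℝ)+1)*((j:ℝ)+2)/2) * mzv2 (3+j) (m+1-j))
        + (((m:ℝ)+1)*((m:ℝ)+2)/2) * mzv2 (m+3) 1 + ((m:ℝ)+1) * mzv2 (m+2) 2 + mzv2 (m+1) 3 := by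
      have h := CF3 (m+1) (by omega) 0 (by omega)
      rw [show 0+(m+1)+2 = m+3 from by omega, show 0+(m+1)+1 = m+2 from by omega,
          show 0+(m+1) = m+1 from by omega] at h
      have e : ∑ j ∈ range (m+1), (((j:ℝ)+1)*((j:ℝ)+2)/2) * mzv2 (0+3+j) (m+1-j)
          = ∑ j ∈ range (m+1), (((j:ℝ)+1)*((j:ℝ)+2)/2) * mzv2 (3+j) (m+1-j) := by
        refine Finset.sum_congr rfl fun j _ => ?_
        rw [show 0+3+j = 3+j from by omega]
      rw [e] at h
      rw [h]
      push_cast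
      ring
    have hSv : ∑ i ∈ range (m+2), ((i:ℝ)*((i:ℝ)+1)/2) * mzv2 (2+i) (m+2-i)
        = ∑ j ∈ range (m+1), (((j:ℝ)+1)*((j:ℝ)+2)/2) * mzv2 (3+j) (m+1-j) := by
      rw [Finset.sum_range_succ' (fun i => ((i:ℝ)*((i:ℝ)+1)/2) * mzv2 (2+i) (m+2-i)) (m+1)]
      have e : ∑ j ∈ range (m+1), (((j+1:ℕ):ℝ)*(((j+1:ℕ):ℝ)+1)/2) * mzv2 (2+(j+1)) (m+2-(j+1))
          = ∑ j ∈ range (m+1), (((j:ℝ)+1)*((j:ℝ)+2)/2) * mzv2 (3+j) (m+1-j) := by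
        refine Finset.sum_congr rfl fun j _ => ?_
        rw [show 2+(j+1) = 3+j from by omega, show m+2-(j+1) = m+1-j from by omega]
        push_cast
        ring
      rw [e]
      norm_num
    rw [hSv] at *
    have hTP3 : TT 3 (m+1) 0 = zetaR 3 * zetaR (m+1) := TP 3 (m+1) (by omega) (by omega)
    have hSt3 : zetaR 3 * zetaR (m+1) = mzv2 3 (m+1) + mzv2 (m+1) 3 + zetaR (m+4) := by
      have h := stuffle 3 (m+1) (by omega) (by omega)
      rwa [show 3+(m+1) = m+4 from by omega] at h
    push_cast
    linear_combination hE1 - 3*hS2 + 3*hTP2 + 3*hSt2 - 2*hS3 + 2*hTP3 + 2*hSt3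
end
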